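/- Let T(x,y) = (f(x), g(x,y)) be a C² skew product expanding map of 𝕋². For any (x₀,y₀) ∈ 𝕋², setting S₀ = {x₀}×𝕋 ∪ 𝕋×{y₀}, there exists a finite partition ℛ of 𝕋² into Markov proper sets R_i such that: (1) for each i, T(R_i) = 𝕋² and T restricted to the interior of R_i is one-to-one; (2) for any i, j, either π(int R_i) ∩ π(int R_j) = ∅ or π(int R_i) = π(int R_j), where π(x,y) = x; (3) the boundary of ℛ satisfies T(∂R_i) ⊂ S₀; (4) 𝒫 = π(ℛ) is a Markov partition for f. -/

import Mathlib

open MeasureTheory Filter Metric Set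
open scoped Topology ENNReal NNReal

noncomputable section

instance fact_zero_lt_one_real : Fact ((0:ℝ) < 1) := ⟨one_pos⟩

/-- The circle `𝕊 = ℝ/ℤ`. -/
abbrev 𝕊 : Type := AddCircle (1 : ℝ)

/-- The two-dimensional torus `𝕋² = (ℝ/ℤ)²`. -/
abbrev T2 : Type := 𝕊 × 𝕊

/-- Representative in `[0,1)` of a point of the circle. -/
def circleRep (a : 𝕊) : ℝ := ((AddCircle.equivIco 1 0) a : ℝ)

/-- Representative in `[0,1)²` of a point of the torus. -/
def torusRep2 (p : T2) : ℝ × ℝ := (circleRep p.1, circleRep p.2)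

/-! ### Kolmogorov–Sinai entropy, equilibrium states -/

/-- Shannon entropy of a finite family of sets. -/
def partitionEntropy {X : Type*} [MeasurableSpace X] (μ : Measure X) (P : Finset (Set X)) : ℝ :=
  ∑ A ∈ P, -((μ A).toReal * Real.log (μ A).toReal)

/-- Dynamical refinement `⋁_{k<n} T^{-k} P` of a finite family of sets. -/
def dynRefine {X : Type*} (T : X → X) (P : Finset (Set X)) (n : ℕ) : Finset (Set X) :=
  letI := Classical.decEq (Set X)
  (Finset.univ : Finset (Fin n → {A // A ∈ P})).image
    (fun c => ⋂ k : Fin n, (T^[(k : ℕ)]) ⁻¹' (c k : Set X))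

/-- A finite measurable partition (mod `μ`). -/
def IsMeasPartition {X : Type*} [MeasurableSpace X] (μ : Measure X) (P : Finset (Set X)) : Prop :=
  (∀ A ∈ P, MeasurableSet A) ∧ μ ((⋃ A ∈ P, A)ᶜ) = 0 ∧
    ∀ A ∈ P, ∀ B ∈ P, A ≠ B → μ (A ∩ B) = 0

/-- Kolmogorov–Sinai (measure-theoretic) entropy of `(T,μ)`. -/
def ksEntropy {X : Type*} [MeasurableSpace X] (T : X → X) (μ : Measure X) : ℝ :=
  ⨆ P : {P : Finset (Set X) // IsMeasPartition μ P},
    Filter.atTop.liminf (fun n : ℕ => partitionEntropy μ (dynRefine T P.1 n) / n)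

/-- `μ` is an equilibrium state for the potential `φ`. -/
def IsEquilibrium {X : Type*} [MeasurableSpace X] (T : X → X) (φ : X → ℝ) (μ : Measure X) :
    Prop :=
  IsProbabilityMeasure μ ∧ MeasurePreserving T μ μ ∧
    ∀ ν : Measure X, IsProbabilityMeasure ν → MeasurePreserving T ν ν →
      ksEntropy T ν + ∫ x, φ x ∂ν ≤ ksEntropy T μ + ∫ x, φ x ∂μ

/-- The pressure of `φ` (realized by the equilibrium state `μ`) is zero. -/
def PressureZero {X : Type*} [MeasurableSpace X] (T : X → X) (φ : X → ℝ) (μ : Measure X) :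
    Prop :=
  ksEntropy T μ + ∫ x, φ x ∂μ = 0

/-- Hölder continuity. -/
def HolderCont {X : Type*} [PseudoMetricSpace X] (φ : X → ℝ) : Prop :=
  ∃ C r : ℝ≥0, 0 < r ∧ HolderWith C r φ

/-- Hausdorff dimension of a measure: the infimum of the Hausdorff dimensions of sets of
positive measure. -/
def measureDimH {X : Type*} [EMetricSpace X] [MeasurableSpace X] (μ : Measure X) : ℝ≥0∞ :=
  ⨅ (s : Set X) (_ : 0 < μ s), dimH s

/-! ### Skew product expanding maps of `𝕋²` -/

/-- A `C²` skew-product expanding map `T(x,y) = (f(x), g(x,y))` of `𝕋²`, together with a `C²`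
lift `(F,G)` to `ℝ²` which is uniformly expanding (`sup ‖(dT)⁻¹‖ < 1`). -/
structure SkewSystem where
  f : 𝕊 → 𝕊
  g : T2 → 𝕊
  F : ℝ → ℝ
  G : ℝ × ℝ → ℝ
  smooth : ContDiff ℝ 2 (fun z : ℝ × ℝ => (F z.1, G z))
  liftf : ∀ t : ℝ, f (t : 𝕊) = ((F t : ℝ) : 𝕊)
  liftg : ∀ z : ℝ × ℝ, g ((z.1 : 𝕊), (z.2 : 𝕊)) = ((G z : ℝ) : 𝕊)
  expanding : ∃ c : ℝ, 0 ≤ c ∧ c < 1 ∧ ∀ z v : ℝ × ℝ,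
    ‖v‖ ≤ c * ‖(fderiv ℝ (fun w : ℝ × ℝ => (F w.1, G w)) z) v‖

/-- The skew product map `T(x,y) = (f(x), g(x,y))`. -/
def SkewSystem.T (S : SkewSystem) : T2 → T2 := fun p => (S.f p.1, S.g p)

/-- `f'` as a function on the circle. -/
def SkewSystem.fp (S : SkewSystem) (x : 𝕊) : ℝ := deriv S.F (circleRep x)

/-- `∂g/∂y` as a function on the torus. -/
def SkewSystem.gy (S : SkewSystem) (p : T2) : ℝ := fderiv ℝ S.G (torusRep2 p) (0, 1)

/-- `∂g/∂x` as a function on the torus. -/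
def SkewSystem.gx (S : SkewSystem) (p : T2) : ℝ := fderiv ℝ S.G (torusRep2 p) (1, 0)

/-- `F_n = ∏_{j<n} f' ∘ f^j`, as a function on the circle. -/
def SkewSystem.FnC (S : SkewSystem) (n : ℕ) (x : 𝕊) : ℝ :=
  ∏ j ∈ Finset.range n, S.fp (S.f^[j] x)

/-- `F_n = ∏_{j<n} f' ∘ f^j ∘ π` on the torus. -/
def SkewSystem.Fn (S : SkewSystem) (n : ℕ) (p : T2) : ℝ := S.FnC n p.1

/-- `G_n = ∏_{j<n} (∂g/∂y) ∘ T^j`. -/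
def SkewSystem.Gn (S : SkewSystem) (n : ℕ) (p : T2) : ℝ :=
  ∏ j ∈ Finset.range n, S.gy (S.T^[j] p)

/-- The Lyapunov exponent `λ^u = ∫ log |f'| dμ`. -/
def SkewSystem.lamU (S : SkewSystem) (μ : Measure T2) : ℝ := ∫ p, Real.log |S.fp p.1| ∂μ

/-- The Lyapunov exponent `λ^{uu} = ∫ log |∂g/∂y| dμ`. -/
def SkewSystem.lamUU (S : SkewSystem) (μ : Measure T2) : ℝ := ∫ p, Real.log |S.gy p| ∂μ

/-- Birkhoff sum `S_n h = ∑_{k<n} h ∘ T^k`. -/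
def birk {X : Type*} (T : X → X) (h : X → ℝ) (n : ℕ) (p : X) : ℝ :=
  ∑ k ∈ Finset.range n, h (T^[k] p)

/-- `n_ε(x,y)` is the largest integer `k` with `G_k(x,y) ε ≤ 1`. -/
def IsNeps (S : SkewSystem) (neps : ℝ → T2 → ℕ) : Prop :=
  ∀ ε : ℝ, 0 < ε → ∀ p : T2,
    S.Gn (neps ε p) p * ε ≤ 1 ∧ ∀ k : ℕ, S.Gn k p * ε ≤ 1 → k ≤ neps ε p

/-- `m_ε(x)` is the largest integer `k` with `F_k(x) ε ≤ 1`. -/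
def IsMeps (S : SkewSystem) (meps : ℝ → 𝕊 → ℕ) : Prop :=
  ∀ ε : ℝ, 0 < ε → ∀ x : 𝕊,
    S.FnC (meps ε x) x * ε ≤ 1 ∧ ∀ k : ℕ, S.FnC k x * ε ≤ 1 → k ≤ meps ε x

/-! ### Markov partitions and cylinders -/

/-- `S₀ = {x₀}×𝕋 ∪ 𝕋×{y₀}`. -/
def S0 (x0 y0 : 𝕊) : Set T2 :=
  ({x0} ×ˢ (Set.univ : Set 𝕊)) ∪ ((Set.univ : Set 𝕊) ×ˢ {y0})

/-- A finite partition into proper sets: each element is the closure of its interior, the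
elements cover, and their interiors are pairwise disjoint. -/
def IsProperPartition {X : Type*} [TopologicalSpace X] (R : Finset (Set X)) : Prop :=
  (∀ A ∈ R, closure (interior A) = A) ∧ (⋃ A ∈ R, A) = Set.univ ∧
    ∀ A ∈ R, ∀ B ∈ R, A ≠ B → interior A ∩ interior B = ∅

/-- A Markov partition for `f`: a proper partition such that each element maps onto a union
of elements (if `f(int A)` meets `int B` then `B ⊆ f(A)`). -/
def IsMarkovPartition {X : Type*} [TopologicalSpace X] (f : X → X) (P : Finset (Set X)) :
    Prop :=
  IsProperPartition P ∧
    ∀ A ∈ P, ∀ B ∈ P, (f '' interior A ∩ interior B).Nonempty → B ⊆ f '' A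

/-- Projection `π(ℛ)` of a family of subsets of `𝕋²` to the circle. -/
def projOf (R : Finset (Set T2)) : Finset (Set 𝕊) :=
  letI := Classical.decEq (Set 𝕊)
  R.image (fun A => Prod.fst '' A)

/-- The Markov partition `ℛ` of `𝕋²` constructed from `S₀ = {x₀}×𝕋 ∪ 𝕋×{y₀}`
(Lemma on fibered Markov partitions), bundled with its properties. -/
structure MarkovData (S : SkewSystem) where
  x0 : 𝕊
  y0 : 𝕊
  part : Finset (Set T2)
  proper : IsProperPartition part
  onto : ∀ R ∈ part, S.T '' R = Set.univ
  inj : ∀ R ∈ part, Set.InjOn S.T (interior R)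
  projAgree : ∀ R ∈ part, ∀ R' ∈ part,
    (Prod.fst '' interior R) ∩ (Prod.fst '' interior R') = ∅ ∨
      Prod.fst '' interior R = Prod.fst '' interior R'
  border : ∀ R ∈ part, S.T '' frontier R ⊆ S0 x0 y0
  projMarkov : IsMarkovPartition S.f (projOf part)

/-- The element of the partition `P` containing `p` (an arbitrary one for boundary points). -/
def cellOf {X : Type*} (P : Finset (Set X)) (p : X) : Set X :=
  letI := Classical.propDecidable
  if h : ∃ A ∈ P, p ∈ A then h.choose else ∅

/-- The `n`-cylinder of `p`: the element of `⋁_{k<n} T^{-k} P` containing `p`. -/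
def cylDyn {X : Type*} (T : X → X) (P : Finset (Set X)) (n : ℕ) (p : X) : Set X :=
  ⋂ k ∈ Finset.range n, (T^[k]) ⁻¹' (cellOf P (T^[k] p))

/-- The cylinder `ℛ_n(x,y)` for `T`. -/
def cylT (S : SkewSystem) (M : MarkovData S) (n : ℕ) (p : T2) : Set T2 :=
  cylDyn S.T M.part n p

/-- The cylinder `𝒫_m(x)` for `f`. -/
def cylF (S : SkewSystem) (M : MarkovData S) (m : ℕ) (x : 𝕊) : Set 𝕊 :=
  cylDyn S.f (projOf M.part) m x

/-- The multi-temporal Markov approximation of the ball: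
`C_ε(x,y) = ℛ_{n_ε(x,y)}(x,y) ∩ π⁻¹(𝒫_{m_ε(x)}(x))`. -/
def Ceps (S : SkewSystem) (M : MarkovData S) (neps : ℝ → T2 → ℕ) (meps : ℝ → 𝕊 → ℕ)
    (ε : ℝ) (p : T2) : Set T2 :=
  cylT S M (neps ε p) p ∩ (Prod.fst ⁻¹' cylF S M (meps ε p.1) p.1)


namespace MarkovAux


lemma coe_eq_coe_iff {a b : ℝ} : (a : 𝕊) = b ↔ ∃ k : ℤ, b = a + k := by
  rw [QuotientAddGroup.eq_iff_sub_mem]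
  constructor
  · rintro h
    rw [AddSubgroup.mem_zmultiples_iff] at h
    obtain ⟨k, hk⟩ := h
    simp only [zsmul_eq_mul, mul_one] at hk
    exact ⟨-k, by push_cast; linarith⟩
  · rintro ⟨k, rfl⟩
    rw [AddSubgroup.mem_zmultiples_iff]
    exact ⟨-k, by simp only [zsmul_eq_mul, mul_one]; push_cast; ring⟩

lemma coe_add_int (a : ℝ) (k : ℤ) : ((a + k : ℝ) : 𝕊) = a :=
  (coe_eq_coe_iff.mpr ⟨k, rfl⟩).symm

lemma coe_open : IsOpenMap (fun t : ℝ => (t : 𝕊)) := QuotientAddGroup.isOpenMap_coe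
lemma coe_cont : Continuous (fun t : ℝ => (t : 𝕊)) := continuous_quotient_mk'
lemma coe_surj : Function.Surjective (fun t : ℝ => (t : 𝕊)) := Quotient.exists_rep

lemma int_eq_zero_of_abs_lt {m : ℤ} (h : |(m : ℝ)| < 1) : m = 0 := by
  have : |m| < 1 := by exact_mod_cast (by rwa [← Int.cast_abs] at h : ((|m| : ℤ) : ℝ) < 1)
  exact Int.abs_lt_one_iff.mp this

lemma exists_rep_Icc (A : ℝ) (x : 𝕊) : ∃ t ∈ Icc A (A + 1), (t : 𝕊) = x := by
  obtain ⟨b, rfl⟩ := coe_surj x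
  refine ⟨toIcoMod one_pos A b, Ico_subset_Icc_self (toIcoMod_mem_Ico one_pos A b), ?_⟩
  refine coe_eq_coe_iff.mpr ⟨toIcoDiv one_pos A b, ?_⟩
  have := self_sub_toIcoMod one_pos A b
  simp only [zsmul_eq_mul, mul_one] at this
  linarith

lemma int_valued_const {h : ℝ → ℝ} (hc : Continuous h) (hint : ∀ t, ∃ k : ℤ, h t = k)
    (a b : ℝ) : h a = h b := by
  by_contra hne
  obtain ⟨ka, hka⟩ := hint a
  obtain ⟨kb, hkb⟩ := hint b
  have hkab : ka ≠ kb := fun h' => hne (by rw [hka, hkb, h'])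
  rcases hkab.lt_or_gt with hlt | hlt
  · have hmem : (ka : ℝ) + 1/2 ∈ uIcc (h a) (h b) := by
      rw [hka, hkb]
      have : (ka : ℝ) + 1 ≤ kb := by exact_mod_cast hlt
      exact mem_uIcc.mpr (Or.inl ⟨by linarith, by linarith⟩)
    obtain ⟨t, _, ht⟩ := intermediate_value_uIcc hc.continuousOn hmem
    obtain ⟨kt, hkt⟩ := hint t
    rw [hkt] at ht
    have : (2*kt : ℤ) = 2*ka + 1 := by exact_mod_cast (by push_cast; linarith : ((2*kt : ℤ) : ℝ) = ((2*ka + 1 : ℤ) : ℝ))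
    omega
  · have hmem : (kb : ℝ) + 1/2 ∈ uIcc (h a) (h b) := by
      rw [hka, hkb]
      have : (kb : ℝ) + 1 ≤ ka := by exact_mod_cast hlt
      exact mem_uIcc.mpr (Or.inr ⟨by linarith, by linarith⟩)
    obtain ⟨t, _, ht⟩ := intermediate_value_uIcc hc.continuousOn hmem
    obtain ⟨kt, hkt⟩ := hint t
    rw [hkt] at ht
    have : (2*kt : ℤ) = 2*kb + 1 := by exact_mod_cast (by push_cast; linarith : ((2*kt : ℤ) : ℝ) = ((2*kb + 1 : ℤ) : ℝ))
    omega

lemma exists_between_nat {u : ℤ → ℝ} (hu : StrictMono u) {t : ℝ} :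
    ∀ D : ℕ, D ≠ 0 → u 0 ≤ t → t ≤ u D → ∃ k : ℕ, k + 1 ≤ D ∧ u k ≤ t ∧ t ≤ u (k+1) := by
  intro D
  induction D with
  | zero => intro h; exact absurd rfl h
  | succ D ih =>
    intro _ h0 h1
    rcases Nat.eq_zero_or_pos D with rfl | hD
    · exact ⟨0, le_refl 1, by simpa using h0, by push_cast at h1 ⊢; simpa using h1⟩
    · by_cases ht : t ≤ u D
      · obtain ⟨k, hk, hk1, hk2⟩ := ih hD.ne' h0 ht
        exact ⟨k, hk.trans (Nat.le_succ D), hk1, hk2⟩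
      · exact ⟨D, le_refl _, (not_le.mp ht).le, by push_cast at h1 ⊢; simpa using h1⟩



lemma lam_tendsto : Tendsto (fun n : ℕ => (1:ℝ)/(n+2)) atTop (𝓝 0) := by
  have h := tendsto_one_div_add_atTop_nhds_zero_nat (𝕜 := ℝ)
  refine squeeze_zero (fun n => by positivity) (fun n => ?_) h
  apply div_le_div_of_nonneg_left one_pos.le (by positivity)
  push_cast; linarith

lemma region_isClosed {a b : ℝ} {v1 v2 : ℝ → ℝ} (h1 : Continuous v1) (h2 : Continuous v2) :
    IsClosed {z : ℝ × ℝ | z.1 ∈ Icc a b ∧ z.2 ∈ Icc (v1 z.1) (v2 z.1)} := by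
  have : {z : ℝ × ℝ | z.1 ∈ Icc a b ∧ z.2 ∈ Icc (v1 z.1) (v2 z.1)} =
      ({z : ℝ × ℝ | a ≤ z.1} ∩ {z | z.1 ≤ b}) ∩
      ({z : ℝ × ℝ | v1 z.1 ≤ z.2} ∩ {z | z.2 ≤ v2 z.1}) := by
    ext z; simp only [mem_setOf_eq, mem_inter_iff, mem_Icc]
  rw [this]
  exact (((isClosed_le continuous_const continuous_fst).inter
      (isClosed_le continuous_fst continuous_const))).inter
    (((isClosed_le (h1.comp continuous_fst) continuous_snd)).inter
      (isClosed_le continuous_snd (h2.comp continuous_fst)))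

lemma region_closure {a b : ℝ} (hab : a < b) {v1 v2 : ℝ → ℝ} (h1 : Continuous v1)
    (h2 : Continuous v2) (hlt : ∀ x, v1 x < v2 x) :
    closure {z : ℝ × ℝ | z.1 ∈ Ioo a b ∧ z.2 ∈ Ioo (v1 z.1) (v2 z.1)} =
      {z : ℝ × ℝ | z.1 ∈ Icc a b ∧ z.2 ∈ Icc (v1 z.1) (v2 z.1)} := by
  apply Subset.antisymm
  · exact closure_minimal (fun z hz => ⟨Ioo_subset_Icc_self hz.1, Ioo_subset_Icc_self hz.2⟩)
      (region_isClosed h1 h2)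
  · rintro ⟨t, s⟩ ⟨ht, hs⟩
    set lam : ℕ → ℝ := fun n => (1:ℝ)/(n+2) with hlam
    have hlpos : ∀ n, 0 < lam n := fun n => by positivity
    have hllt : ∀ n, lam n < 1 := fun n => by
      rw [hlam]; rw [div_lt_one (by positivity)]; push_cast; linarith [Nat.cast_nonneg (α := ℝ) n]
    have hl0 : Tendsto lam atTop (𝓝 0) := lam_tendsto
    set θ : ℝ := (s - v1 t) / (v2 t - v1 t) with hθdef
    have hvne : v2 t - v1 t > 0 := sub_pos.mpr (hlt t)
    have hθ0 : 0 ≤ θ := div_nonneg (by linarith [hs.1]) hvne.le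
    have hθ1 : θ ≤ 1 := by rw [div_le_one hvne]; linarith [hs.2]
    set tn : ℕ → ℝ := fun n => (1 - lam n) * t + lam n * ((a + b)/2) with htn
    set θn : ℕ → ℝ := fun n => (1 - lam n) * θ + lam n * (1/2) with hθn
    set sn : ℕ → ℝ := fun n => v1 (tn n) + θn n * (v2 (tn n) - v1 (tn n)) with hsn
    have htmem : ∀ n, tn n ∈ Ioo a b := by
      intro n
      have h1' := hlpos n; have h2' := hllt n
      have hta := ht.1; have htb := ht.2
      simp only [htn]
      constructor
      · nlinarith
      · nlinarith
    have hθmem : ∀ n, θn n ∈ Ioo (0:ℝ) 1 := by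
      intro n
      have h1' := hlpos n; have h2' := hllt n
      simp only [hθn]
      constructor
      · nlinarith
      · nlinarith
    have hsmem : ∀ n, sn n ∈ Ioo (v1 (tn n)) (v2 (tn n)) := by
      intro n
      have hv := sub_pos.mpr (hlt (tn n))
      have h0 := (hθmem n).1; have h1'' := (hθmem n).2
      constructor
      · simp only [hsn]; nlinarith
      · simp only [hsn]; nlinarith
    have htnlim : Tendsto tn atTop (𝓝 t) := by
      have : Tendsto (fun n => t + lam n * ((a+b)/2 - t)) atTop (𝓝 (t + 0)) :=
        tendsto_const_nhds.add (by have := hl0.mul_const ((a+b)/2 - t); rwa [zero_mul] at this)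
      simp only [add_zero] at this
      exact this.congr (fun n => by simp only [htn]; ring)
    have hθnlim : Tendsto θn atTop (𝓝 θ) := by
      have : Tendsto (fun n => θ + lam n * (1/2 - θ)) atTop (𝓝 (θ + 0)) :=
        tendsto_const_nhds.add (by have := hl0.mul_const (1/2 - θ); rwa [zero_mul] at this)
      simp only [add_zero] at this
      exact this.congr (fun n => by simp only [hθn]; ring)
    have hsnlim : Tendsto sn atTop (𝓝 s) := by
      have hv1 : Tendsto (fun n => v1 (tn n)) atTop (𝓝 (v1 t)) :=
        (h1.continuousAt.tendsto).comp htnlim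
      have hv2 : Tendsto (fun n => v2 (tn n)) atTop (𝓝 (v2 t)) :=
        (h2.continuousAt.tendsto).comp htnlim
      have : Tendsto sn atTop (𝓝 (v1 t + θ * (v2 t - v1 t))) :=
        hv1.add (hθnlim.mul (hv2.sub hv1))
      have heq : v1 t + θ * (v2 t - v1 t) = s := by
        rw [hθdef, div_mul_cancel₀ _ (ne_of_gt hvne)]; ring
      rwa [heq] at this
    exact mem_closure_of_tendsto (htnlim.prodMk_nhds hsnlim)
      (Eventually.of_forall (fun n => ⟨htmem n, hsmem n⟩))


/-! ### The construction -/

def qmap : ℝ × ℝ → T2 := fun z => ((z.1 : 𝕊), (z.2 : 𝕊))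

lemma qmap_cont : Continuous qmap := (coe_cont.comp continuous_fst).prodMk (coe_cont.comp continuous_snd)

lemma qmap_open : IsOpenMap qmap := IsOpenMap.prodMap coe_open coe_open

lemma qmap_surj : Function.Surjective qmap := fun p => by
  obtain ⟨a, ha⟩ := coe_surj p.1
  obtain ⟨b, hb⟩ := coe_surj p.2
  exact ⟨(a, b), by simp [qmap, ha, hb]⟩

lemma qmap_eq_iff {t s t' s' : ℝ} :
    qmap (t, s) = qmap (t', s') ↔ ∃ m n : ℤ, t' = t + m ∧ s' = s + n := by
  constructor
  · intro h
    have h1 : ((t : 𝕊)) = (t' : 𝕊) := congrArg Prod.fst h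
    have h2 : ((s : 𝕊)) = (s' : 𝕊) := congrArg Prod.snd h
    obtain ⟨m, hm⟩ := coe_eq_coe_iff.mp h1
    obtain ⟨n, hn⟩ := coe_eq_coe_iff.mp h2
    exact ⟨m, n, hm, hn⟩
  · rintro ⟨m, n, rfl, rfl⟩
    simp only [qmap, Prod.mk.injEq]
    exact ⟨(coe_add_int t m).symm, (coe_add_int s n).symm⟩

section Construction

variable (u : ℤ → ℝ) (v : ℝ → ℤ → ℝ)

def Reg (k j : ℤ) : Set (ℝ × ℝ) :=
  {z | z.1 ∈ Icc (u k) (u (k+1)) ∧ z.2 ∈ Icc (v z.1 j) (v z.1 (j+1))}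

def Opn (k j : ℤ) : Set (ℝ × ℝ) :=
  {z | z.1 ∈ Ioo (u k) (u (k+1)) ∧ z.2 ∈ Ioo (v z.1 j) (v z.1 (j+1))}

def Rset (k j : ℤ) : Set T2 := qmap '' Reg u v k j

def Iset (k : ℤ) : Set 𝕊 := (fun t : ℝ => (t : 𝕊)) '' Icc (u k) (u (k+1))

variable {u v}
variable {D E : ℕ}

lemma ulen (hu : StrictMono u) (huD : ∀ k, u (k + D) = u k + 1) (hD : 2 ≤ D) (k : ℤ) :
    u (k+1) - u k < 1 := by
  have h1 : u (k+1) < u (k+2) := hu (by omega)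
  have h2 : u (k+2) ≤ u (k + D) := hu.monotone (by omega)
  have := huD k
  linarith

lemma vlen (hvm : ∀ x, StrictMono (v x)) (hvE : ∀ x j, v x (j + E) = v x j + 1) (hE : 2 ≤ E)
    (x : ℝ) (j : ℤ) : v x (j+1) - v x j < 1 := by
  have h1 : v x (j+1) < v x (j+2) := hvm x (by omega)
  have h2 : v x (j+2) ≤ v x (j + E) := (hvm x).monotone (by omega)
  have := hvE x j
  linarith

lemma mem_Rset_iff {k j : ℤ} {t s : ℝ} :
    qmap (t, s) ∈ Rset u v k j ↔ ∃ m n : ℤ, ((t + m : ℝ), (s + n : ℝ)) ∈ Reg u v k j := by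
  constructor
  · rintro ⟨⟨t', s'⟩, hz, hq⟩
    obtain ⟨m, n, hm, hn⟩ := qmap_eq_iff.mp hq.symm
    exact ⟨m, n, by rwa [← hm, ← hn]⟩
  · rintro ⟨m, n, h⟩
    exact ⟨((t + m : ℝ), (s + n : ℝ)), h, (qmap_eq_iff.mpr ⟨m, n, rfl, rfl⟩).symm⟩

lemma opn_open (hvc : ∀ j, Continuous (fun x => v x j)) (k j : ℤ) : IsOpen (Opn u v k j) := by
  have : Opn u v k j =
      ({z : ℝ × ℝ | u k < z.1} ∩ {z | z.1 < u (k+1)}) ∩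
      ({z : ℝ × ℝ | v z.1 j < z.2} ∩ {z | z.2 < v z.1 (j+1)}) := by
    ext z; simp only [Opn, mem_setOf_eq, mem_inter_iff, mem_Ioo]
  rw [this]
  exact (((isOpen_lt continuous_const continuous_fst).inter
      (isOpen_lt continuous_fst continuous_const))).inter
    (((isOpen_lt ((hvc j).comp continuous_fst) continuous_snd)).inter
      (isOpen_lt continuous_snd ((hvc (j+1)).comp continuous_fst)))

lemma reg_closure (hu : StrictMono u) (hvc : ∀ j, Continuous (fun x => v x j))
    (hvm : ∀ x, StrictMono (v x)) (k j : ℤ) :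
    closure (Opn u v k j) = Reg u v k j :=
  region_closure (hu (by omega)) (hvc j) (hvc (j+1)) (fun x => hvm x (by omega))

lemma reg_compact (hu : StrictMono u) (hvc : ∀ j, Continuous (fun x => v x j)) (k j : ℤ) :
    IsCompact (Reg u v k j) := by
  obtain ⟨c, hc⟩ := (isCompact_Icc.image_of_continuousOn (hvc j).continuousOn).bddBelow
    |>.imp (fun c hc => hc)
  obtain ⟨d, hd⟩ := (isCompact_Icc.image_of_continuousOn (hvc (j+1)).continuousOn).bddAbove
    |>.imp (fun d hd => hd)
  apply Metric.isCompact_of_isClosed_isBounded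
  · exact region_isClosed (hvc j) (hvc (j+1))
  · apply Bornology.IsBounded.subset ((Metric.isBounded_Icc (u k) (u (k+1))).prod
      (Metric.isBounded_Icc c d))
    rintro ⟨t, s⟩ ⟨ht, hs⟩
    refine ⟨ht, ?_, ?_⟩
    · exact le_trans (hc ⟨t, ht, rfl⟩) hs.1
    · exact le_trans hs.2 (hd ⟨t, ht, rfl⟩)

lemma rset_compact (hu : StrictMono u) (hvc : ∀ j, Continuous (fun x => v x j)) (k j : ℤ) :
    IsCompact (Rset u v k j) := (reg_compact hu hvc k j).image qmap_cont

lemma rset_closure (hu : StrictMono u) (hvc : ∀ j, Continuous (fun x => v x j))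
    (hvm : ∀ x, StrictMono (v x)) (k j : ℤ) :
    closure (qmap '' Opn u v k j) = Rset u v k j := by
  apply Subset.antisymm
  · exact closure_minimal (image_mono (fun z hz => ⟨Ioo_subset_Icc_self hz.1, Ioo_subset_Icc_self hz.2⟩))
      (rset_compact hu hvc k j).isClosed
  · rw [Rset, ← reg_closure hu hvc hvm k j]
    exact (image_closure_subset_closure_image qmap_cont)

end Construction

section Interior

variable {u : ℤ → ℝ} {v : ℝ → ℤ → ℝ} {D E : ℕ}

lemma not_interior_of_seq {X : Type*} [TopologicalSpace X] {A : Set X} {p : X} {w : ℕ → X}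
    (hw : Tendsto w atTop (𝓝 p)) (hnot : ∀ n, w n ∉ A) : p ∉ interior A := by
  intro hint
  have hcl : p ∈ closure Aᶜ := mem_closure_of_tendsto hw (Eventually.of_forall hnot)
  obtain ⟨q', hq1, hq2⟩ := mem_closure_iff.mp hcl _ isOpen_interior hint
  exact hq2 (interior_subset hq1)

lemma one_le_int_of_pos {m : ℤ} {δ : ℝ} (hδ : 0 < δ) (h : δ ≤ (m : ℝ)) : (1:ℝ) ≤ (m : ℝ) := by
  have : (0:ℤ) < m := by exact_mod_cast lt_of_lt_of_le hδ h
  exact_mod_cast this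

lemma int_le_neg_one {m : ℤ} {δ : ℝ} (hδ : 0 < δ) (h : (m : ℝ) ≤ -δ) : (m : ℝ) ≤ -1 := by
  have h0 : (m:ℝ) < 0 := lt_of_le_of_lt h (by linarith)
  have h1 : m < 0 := by exact_mod_cast h0
  have h2 : m ≤ -1 := by omega
  exact_mod_cast h2

lemma int_zero_of_mem_Icc (hu : StrictMono u) (huD : ∀ k, u (k + D) = u k + 1) (hD : 2 ≤ D)
    {k m : ℤ} {t : ℝ} (ht : t ∈ Ioo (u k) (u (k+1))) (h : t + m ∈ Icc (u k) (u (k+1))) :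
    m = 0 := by
  have hl := ulen hu huD hD k
  apply int_eq_zero_of_abs_lt
  rw [abs_lt]
  constructor
  · have := h.1; have := ht.2; linarith
  · have := h.2; have := ht.1; linarith

lemma delta_seq_tendsto (ε : ℝ) : Tendsto (fun n : ℕ => ε * (1/(n+2))) atTop (𝓝 0) := by
  have := lam_tendsto.const_mul ε
  rwa [mul_zero] at this

lemma delta_seq_mem {ε : ℝ} (hε : 0 < ε) (n : ℕ) : 0 < ε * (1/(n+2)) ∧ ε * (1/(n+2)) < ε := by
  constructor
  · positivity
  · have h1 : (1:ℝ)/(n+2) < 1 := by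
      rw [div_lt_one (by positivity)]; linarith [Nat.cast_nonneg (α := ℝ) n]
    nlinarith

/-- Horizontal perturbation sequences converge. -/
lemma pert_tendsto_left (t s ε : ℝ) :
    Tendsto (fun n : ℕ => qmap (t - ε * (1/(n+2)), s)) atTop (𝓝 (qmap (t, s))) := by
  apply (qmap_cont.continuousAt.tendsto).comp
  have h1 : Tendsto (fun n : ℕ => t - ε * (1/(n+2))) atTop (𝓝 (t - 0)) :=
    tendsto_const_nhds.sub (delta_seq_tendsto ε)
  rw [sub_zero] at h1
  exact h1.prodMk_nhds tendsto_const_nhds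

lemma pert_tendsto_right (t s ε : ℝ) :
    Tendsto (fun n : ℕ => qmap (t + ε * (1/(n+2)), s)) atTop (𝓝 (qmap (t, s))) := by
  apply (qmap_cont.continuousAt.tendsto).comp
  have h1 : Tendsto (fun n : ℕ => t + ε * (1/(n+2))) atTop (𝓝 (t + 0)) :=
    tendsto_const_nhds.add (delta_seq_tendsto ε)
  rw [add_zero] at h1
  exact h1.prodMk_nhds tendsto_const_nhds

lemma pert_tendsto_down (t s ε : ℝ) :
    Tendsto (fun n : ℕ => qmap (t, s - ε * (1/(n+2)))) atTop (𝓝 (qmap (t, s))) := by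
  apply (qmap_cont.continuousAt.tendsto).comp
  have h1 : Tendsto (fun n : ℕ => s - ε * (1/(n+2))) atTop (𝓝 (s - 0)) :=
    tendsto_const_nhds.sub (delta_seq_tendsto ε)
  rw [sub_zero] at h1
  exact tendsto_const_nhds.prodMk_nhds h1

lemma pert_tendsto_up (t s ε : ℝ) :
    Tendsto (fun n : ℕ => qmap (t, s + ε * (1/(n+2)))) atTop (𝓝 (qmap (t, s))) := by
  apply (qmap_cont.continuousAt.tendsto).comp
  have h1 : Tendsto (fun n : ℕ => s + ε * (1/(n+2))) atTop (𝓝 (s + 0)) :=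
    tendsto_const_nhds.add (delta_seq_tendsto ε)
  rw [add_zero] at h1
  exact tendsto_const_nhds.prodMk_nhds h1

lemma interior_Rset_subset (hu : StrictMono u) (huD : ∀ k, u (k + D) = u k + 1) (hD : 2 ≤ D)
    (hvc : ∀ j, Continuous (fun x => v x j)) (hvm : ∀ x, StrictMono (v x))
    (hvE : ∀ x j, v x (j + E) = v x j + 1) (hE : 2 ≤ E) (k j : ℤ) :
    interior (Rset u v k j) ⊆ qmap '' Opn u v k j := by
  intro p hp
  by_contra hnot
  have hpR : p ∈ Rset u v k j := interior_subset hp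
  obtain ⟨⟨t, s⟩, hz, rfl⟩ := hpR
  have hzO : (t, s) ∉ Opn u v k j := fun h => hnot ⟨(t, s), h, rfl⟩
  have htIcc : t ∈ Icc (u k) (u (k+1)) := hz.1
  have hsIcc : s ∈ Icc (v t j) (v t (j+1)) := hz.2
  have hulen := ulen hu huD hD k
  have hvlen := vlen hvm hvE hE t j
  set εk : ℝ := 1 - (u (k+1) - u k) with hεk
  have hεkpos : 0 < εk := by rw [hεk]; linarith
  rcases eq_or_lt_of_le htIcc.1 with hbl | hbl
  · -- t = u k
    refine not_interior_of_seq (pert_tendsto_left t s εk) ?_ hp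
    intro n hmem
    obtain ⟨hδ1, hδ2⟩ := delta_seq_mem hεkpos n
    set δ : ℝ := εk * (1/(n+2))
    obtain ⟨m, n', hreg⟩ := mem_Rset_iff.mp hmem
    have h1 : u k ≤ t - δ + m ∧ t - δ + m ≤ u (k+1) := hreg.1
    have hm1 : (1:ℝ) ≤ (m:ℝ) := one_le_int_of_pos hδ1 (by linarith [h1.1, hbl])
    have : t - δ + m > u (k+1) := by rw [← hbl] at *; rw [hεk] at hδ2; linarith
    linarith [h1.2]
  rcases eq_or_lt_of_le htIcc.2 with hbr | hbr
  case inr.inl =>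
    -- t = u (k+1)
    refine not_interior_of_seq (pert_tendsto_right t s εk) ?_ hp
    intro n hmem
    obtain ⟨hδ1, hδ2⟩ := delta_seq_mem hεkpos n
    set δ : ℝ := εk * (1/(n+2))
    obtain ⟨m, n', hreg⟩ := mem_Rset_iff.mp hmem
    have h1 : u k ≤ t + δ + m ∧ t + δ + m ≤ u (k+1) := hreg.1
    have hm1 : (m:ℝ) ≤ -1 := int_le_neg_one hδ1 (by linarith [h1.2, hbr])
    have : t + δ + m < u k := by rw [hbr] at *; rw [hεk] at hδ2; linarith
    linarith [h1.1]
  case inr.inr =>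
    -- t interior; s on the boundary
    have htIoo : t ∈ Ioo (u k) (u (k+1)) := ⟨hbl, hbr⟩
    have hsBd : s = v t j ∨ s = v t (j+1) := by
      by_contra hs
      push_neg at hs
      exact hzO ⟨htIoo, lt_of_le_of_ne hsIcc.1 (Ne.symm hs.1), lt_of_le_of_ne hsIcc.2 hs.2⟩
    set εj : ℝ := 1 - (v t (j+1) - v t j) with hεj
    have hεjpos : 0 < εj := by rw [hεj]; linarith
    rcases hsBd with hsb | hsb
    · -- s = v t j : approach from below
      refine not_interior_of_seq (pert_tendsto_down t s εj) ?_ hp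
      intro n hmem
      obtain ⟨hδ1, hδ2⟩ := delta_seq_mem hεjpos n
      set δ : ℝ := εj * (1/(n+2))
      obtain ⟨m, n', hreg⟩ := mem_Rset_iff.mp hmem
      have hm0 : m = 0 := int_zero_of_mem_Icc hu huD hD htIoo hreg.1
      rw [hm0] at hreg
      have h2 : v (t + (0:ℤ)) j ≤ s - δ + n' ∧ s - δ + n' ≤ v (t + (0:ℤ)) (j+1) := hreg.2
      simp only [Int.cast_zero, add_zero] at h2
      have hn1 : (1:ℝ) ≤ (n':ℝ) := one_le_int_of_pos hδ1 (by linarith [h2.1, hsb])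
      have : s - δ + n' > v t (j+1) := by rw [hsb] at *; rw [hεj] at hδ2; linarith
      linarith [h2.2]
    · -- s = v t (j+1) : approach from above
      refine not_interior_of_seq (pert_tendsto_up t s εj) ?_ hp
      intro n hmem
      obtain ⟨hδ1, hδ2⟩ := delta_seq_mem hεjpos n
      set δ : ℝ := εj * (1/(n+2))
      obtain ⟨m, n', hreg⟩ := mem_Rset_iff.mp hmem
      have hm0 : m = 0 := int_zero_of_mem_Icc hu huD hD htIoo hreg.1
      rw [hm0] at hreg
      have h2 : v (t + (0:ℤ)) j ≤ s + δ + n' ∧ s + δ + n' ≤ v (t + (0:ℤ)) (j+1) := hreg.2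
      simp only [Int.cast_zero, add_zero] at h2
      have hn1 : (n':ℝ) ≤ -1 := int_le_neg_one hδ1 (by linarith [h2.2, hsb])
      have : s + δ + n' < v t j := by rw [hsb] at *; rw [hεj] at hδ2; linarith
      linarith [h2.1]

lemma interior_Rset_eq (hu : StrictMono u) (huD : ∀ k, u (k + D) = u k + 1) (hD : 2 ≤ D)
    (hvc : ∀ j, Continuous (fun x => v x j)) (hvm : ∀ x, StrictMono (v x))
    (hvE : ∀ x j, v x (j + E) = v x j + 1) (hE : 2 ≤ E) (k j : ℤ) :
    interior (Rset u v k j) = qmap '' Opn u v k j := by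
  apply Subset.antisymm (interior_Rset_subset hu huD hD hvc hvm hvE hE k j)
  apply interior_maximal _ (qmap_open _ (opn_open hvc k j))
  exact image_mono (fun z hz => ⟨Ioo_subset_Icc_self hz.1, Ioo_subset_Icc_self hz.2⟩)

lemma closure_interior_Rset (hu : StrictMono u) (huD : ∀ k, u (k + D) = u k + 1) (hD : 2 ≤ D)
    (hvc : ∀ j, Continuous (fun x => v x j)) (hvm : ∀ x, StrictMono (v x))
    (hvE : ∀ x j, v x (j + E) = v x j + 1) (hE : 2 ≤ E) (k j : ℤ) :
    closure (interior (Rset u v k j)) = Rset u v k j := by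
  rw [interior_Rset_eq hu huD hD hvc hvm hvE hE k j, rset_closure hu hvc hvm k j]

end Interior

section Disjoint

variable {u : ℤ → ℝ} {v : ℝ → ℤ → ℝ} {D E : ℕ}

lemma t_overlap (hu : StrictMono u) (huD : ∀ k, u (k + D) = u k + 1)
    {k k' : ℤ} (hkk' : k < k') (hk'd : k' + 1 ≤ k + D)
    {t t' : ℝ} (ht : t ∈ Ioo (u k) (u (k+1))) (ht' : t' ∈ Ioo (u k') (u (k'+1)))
    {m : ℤ} (hm : t' = t + m) : False := by
  have h1 : u (k+1) ≤ u k' := hu.monotone (by omega)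
  have h2 : u (k'+1) ≤ u (k + D) := hu.monotone (by omega)
  have h3 := huD k
  have hpos : 0 < (m:ℝ) := by
    have := ht.2; have := ht'.1; linarith
  have hlt : (m:ℝ) < 1 := by
    have := ht.1; have := ht'.2; linarith
  have h4 : (1:ℝ) ≤ (m:ℝ) := one_le_int_of_pos hpos (le_refl _)
  linarith

lemma s_overlap (hvm : ∀ x, StrictMono (v x)) (hvE : ∀ x j, v x (j + E) = v x j + 1)
    {x : ℝ} {j j' : ℤ} (hjj' : j < j') (hj'e : j' + 1 ≤ j + E)
    {s s' : ℝ} (hs : s ∈ Ioo (v x j) (v x (j+1))) (hs' : s' ∈ Ioo (v x j') (v x (j'+1)))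
    {n : ℤ} (hn : s' = s + n) : False := by
  have h1 : v x (j+1) ≤ v x j' := (hvm x).monotone (by omega)
  have h2 : v x (j'+1) ≤ v x (j + E) := (hvm x).monotone (by omega)
  have h3 := hvE x j
  have hpos : 0 < (n:ℝ) := by
    have := hs.2; have := hs'.1; linarith
  have hlt : (n:ℝ) < 1 := by
    have := hs.1; have := hs'.2; linarith
  have h4 : (1:ℝ) ≤ (n:ℝ) := one_le_int_of_pos hpos (le_refl _)
  linarith

lemma opn_image_disjoint (hu : StrictMono u) (huD : ∀ k, u (k + D) = u k + 1) (hD : 2 ≤ D)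
    (hvm : ∀ x, StrictMono (v x)) (hvE : ∀ x j, v x (j + E) = v x j + 1)
    {k j k' j' : ℤ} (hk : 0 ≤ k) (hkD : k < D) (hk' : 0 ≤ k') (hk'D : k' < D)
    (hj : 0 ≤ j) (hjE : j < E) (hj' : 0 ≤ j') (hj'E : j' < E)
    (hne : k ≠ k' ∨ j ≠ j') :
    (qmap '' Opn u v k j) ∩ (qmap '' Opn u v k' j') = ∅ := by
  rw [eq_empty_iff_forall_notMem]
  rintro p ⟨⟨z, hz, rfl⟩, ⟨z', hz', hq⟩⟩
  obtain ⟨m, n, hm, hn⟩ := qmap_eq_iff.mp (show qmap (z'.1, z'.2) = qmap (z.1, z.2) by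
    simpa using hq)
  rcases eq_or_ne k k' with rfl | hkk
  · -- same k, so j ≠ j'
    have hjj : j ≠ j' := by tauto
    have hm0 : m = 0 := by
      apply int_zero_of_mem_Icc hu huD hD hz'.1
      rw [← hm]
      exact Ioo_subset_Icc_self hz.1
    rw [hm0, Int.cast_zero, add_zero] at hm
    have heq : z'.1 = z.1 := hm.symm
    have hz'2 : z'.2 ∈ Ioo (v z'.1 j') (v z'.1 (j'+1)) := hz'.2
    rw [heq] at hz'2
    rcases hjj.lt_or_gt with h | h
    · exact s_overlap hvm hvE h (by omega) hz.2 hz'2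
        (show z'.2 = z.2 + (-n : ℤ) by push_cast; linarith)
    · exact s_overlap hvm hvE h (by omega) hz'2 hz.2 hn
  · rcases hkk.lt_or_gt with h | h
    · exact t_overlap hu huD h (by omega) hz.1 hz'.1
        (show z'.1 = z.1 + (-m : ℤ) by push_cast; linarith)
    · exact t_overlap hu huD h (by omega) hz'.1 hz.1 hm

lemma rset_cover (hu : StrictMono u) (huD : ∀ k, u (k + D) = u k + 1) (hD : 2 ≤ D)
    (hvm : ∀ x, StrictMono (v x)) (hvE : ∀ x j, v x (j + E) = v x j + 1) (hE : 2 ≤ E)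
    (p : T2) : ∃ k j : ℕ, k + 1 ≤ D ∧ j + 1 ≤ E ∧ p ∈ Rset u v k j := by
  obtain ⟨⟨t, s⟩, rfl⟩ := qmap_surj p
  set m : ℤ := ⌈u 0 - t⌉ with hmdef
  have hm1 : u 0 - t ≤ m := Int.le_ceil _
  have hm2 : (m:ℝ) < u 0 - t + 1 := by
    have := Int.ceil_lt_add_one (u 0 - t); rwa [hmdef]
  have htmem : u 0 ≤ t + m ∧ t + m ≤ u (0 + D) := by
    rw [huD 0]
    constructor <;> linarith
  obtain ⟨k, hkD, hk1, hk2⟩ := exists_between_nat hu D (by omega)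
    (by simpa using htmem.1) (by simpa using htmem.2)
  set x : ℝ := t + m with hxdef
  set n : ℤ := ⌈v x 0 - s⌉ with hndef
  have hn1 : v x 0 - s ≤ n := Int.le_ceil _
  have hn2 : (n:ℝ) < v x 0 - s + 1 := by
    have := Int.ceil_lt_add_one (v x 0 - s); rwa [hndef]
  have hsmem : v x 0 ≤ s + n ∧ s + n ≤ v x (0 + E) := by
    rw [hvE x 0]
    constructor <;> linarith
  obtain ⟨j, hjE, hj1, hj2⟩ := exists_between_nat (hvm x) E (by omega)
    (by simpa using hsmem.1) (by simpa using hsmem.2)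
  refine ⟨k, j, hkD, hjE, ?_⟩
  rw [mem_Rset_iff]
  exact ⟨m, n, ⟨hk1, hk2⟩, ⟨hj1, hj2⟩⟩

end Disjoint

section Circle

variable {u : ℤ → ℝ} {D : ℕ}

lemma mem_Iset_iff {k : ℤ} {t : ℝ} :
    ((t : 𝕊)) ∈ Iset u k ↔ ∃ m : ℤ, t + m ∈ Icc (u k) (u (k+1)) := by
  constructor
  · rintro ⟨t', ht', hq⟩
    obtain ⟨m, hm⟩ := coe_eq_coe_iff.mp hq
    refine ⟨-m, ?_⟩
    have : t + (-m : ℤ) = t' := by push_cast; linarith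
    rwa [this]
  · rintro ⟨m, hm⟩
    exact ⟨t + m, hm, coe_add_int t m⟩

lemma Iset_compact (k : ℤ) : IsCompact (Iset u k) := isCompact_Icc.image coe_cont

lemma Iset_closure (hu : StrictMono u) (k : ℤ) :
    closure ((fun t : ℝ => (t : 𝕊)) '' Ioo (u k) (u (k+1))) = Iset u k := by
  apply Subset.antisymm
  · exact closure_minimal (image_mono Ioo_subset_Icc_self) (Iset_compact k).isClosed
  · rw [Iset, ← closure_Ioo (hu (show k < k + 1 by omega)).ne]
    exact image_closure_subset_closure_image coe_cont

lemma coe_pert_tendsto_left (t ε : ℝ) :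
    Tendsto (fun n : ℕ => ((t - ε * (1/(n+2)) : ℝ) : 𝕊)) atTop (𝓝 ((t:ℝ) : 𝕊)) := by
  apply (coe_cont.continuousAt.tendsto).comp
  have h1 : Tendsto (fun n : ℕ => t - ε * (1/(n+2))) atTop (𝓝 (t - 0)) :=
    tendsto_const_nhds.sub (delta_seq_tendsto ε)
  rwa [sub_zero] at h1

lemma coe_pert_tendsto_right (t ε : ℝ) :
    Tendsto (fun n : ℕ => ((t + ε * (1/(n+2)) : ℝ) : 𝕊)) atTop (𝓝 ((t:ℝ) : 𝕊)) := by
  apply (coe_cont.continuousAt.tendsto).comp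
  have h1 : Tendsto (fun n : ℕ => t + ε * (1/(n+2))) atTop (𝓝 (t + 0)) :=
    tendsto_const_nhds.add (delta_seq_tendsto ε)
  rwa [add_zero] at h1

lemma interior_Iset_subset (hu : StrictMono u) (huD : ∀ k, u (k + D) = u k + 1) (hD : 2 ≤ D)
    (k : ℤ) : interior (Iset u k) ⊆ (fun t : ℝ => (t : 𝕊)) '' Ioo (u k) (u (k+1)) := by
  intro p hp
  by_contra hnot
  obtain ⟨t, htIcc, rfl⟩ := interior_subset hp
  have hulen := ulen hu huD hD k
  set εk : ℝ := 1 - (u (k+1) - u k) with hεk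
  have hεkpos : 0 < εk := by rw [hεk]; linarith
  rcases eq_or_lt_of_le htIcc.1 with hbl | hbl
  · refine not_interior_of_seq (coe_pert_tendsto_left t εk) ?_ hp
    intro n hmem
    obtain ⟨hδ1, hδ2⟩ := delta_seq_mem hεkpos n
    set δ : ℝ := εk * (1/(n+2))
    obtain ⟨m, h1⟩ := mem_Iset_iff.mp hmem
    have hm1 : (1:ℝ) ≤ (m:ℝ) := one_le_int_of_pos hδ1 (by linarith [h1.1, hbl])
    have : t - δ + m > u (k+1) := by rw [← hbl] at *; rw [hεk] at hδ2; linarith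
    linarith [h1.2]
  rcases eq_or_lt_of_le htIcc.2 with hbr | hbr
  · refine not_interior_of_seq (coe_pert_tendsto_right t εk) ?_ hp
    intro n hmem
    obtain ⟨hδ1, hδ2⟩ := delta_seq_mem hεkpos n
    set δ : ℝ := εk * (1/(n+2))
    obtain ⟨m, h1⟩ := mem_Iset_iff.mp hmem
    have hm1 : (m:ℝ) ≤ -1 := int_le_neg_one hδ1 (by linarith [h1.2, hbr])
    have : t + δ + m < u k := by rw [hbr] at *; rw [hεk] at hδ2; linarith
    linarith [h1.1]
  · exact hnot ⟨t, ⟨hbl, hbr⟩, rfl⟩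

lemma interior_Iset_eq (hu : StrictMono u) (huD : ∀ k, u (k + D) = u k + 1) (hD : 2 ≤ D)
    (k : ℤ) : interior (Iset u k) = (fun t : ℝ => (t : 𝕊)) '' Ioo (u k) (u (k+1)) := by
  apply Subset.antisymm (interior_Iset_subset hu huD hD k)
  apply interior_maximal (image_mono Ioo_subset_Icc_self) (coe_open _ isOpen_Ioo)

lemma closure_interior_Iset (hu : StrictMono u) (huD : ∀ k, u (k + D) = u k + 1) (hD : 2 ≤ D)
    (k : ℤ) : closure (interior (Iset u k)) = Iset u k := by
  rw [interior_Iset_eq hu huD hD k, Iset_closure hu k]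

lemma Iset_cover (hu : StrictMono u) (huD : ∀ k, u (k + D) = u k + 1) (hD : 2 ≤ D)
    (p : 𝕊) : ∃ k : ℕ, k + 1 ≤ D ∧ p ∈ Iset u k := by
  obtain ⟨t, rfl⟩ := coe_surj p
  set m : ℤ := ⌈u 0 - t⌉ with hmdef
  have hm1 : u 0 - t ≤ m := Int.le_ceil _
  have hm2 : (m:ℝ) < u 0 - t + 1 := by
    have := Int.ceil_lt_add_one (u 0 - t); rwa [hmdef]
  have htmem : u 0 ≤ t + m ∧ t + m ≤ u (0 + D) := by
    rw [huD 0]; constructor <;> linarith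
  obtain ⟨k, hkD, hk1, hk2⟩ := exists_between_nat hu D (by omega)
    (by simpa using htmem.1) (by simpa using htmem.2)
  exact ⟨k, hkD, mem_Iset_iff.mpr ⟨m, hk1, hk2⟩⟩

lemma Ioo_image_disjoint (hu : StrictMono u) (huD : ∀ k, u (k + D) = u k + 1)
    {k k' : ℤ} (hk : 0 ≤ k) (hkD : k < D) (hk' : 0 ≤ k') (hk'D : k' < D) (hne : k ≠ k') :
    ((fun t : ℝ => (t : 𝕊)) '' Ioo (u k) (u (k+1))) ∩
      ((fun t : ℝ => (t : 𝕊)) '' Ioo (u k') (u (k'+1))) = ∅ := by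
  rw [eq_empty_iff_forall_notMem]
  rintro p ⟨⟨t, ht, rfl⟩, ⟨t', ht', hq⟩⟩
  obtain ⟨m, hm⟩ := coe_eq_coe_iff.mp hq
  rcases hne.lt_or_gt with h | h
  · exact t_overlap hu huD h (by omega) ht ht'
      (show t' = t + (-m : ℤ) by push_cast; linarith)
  · exact t_overlap hu huD h (by omega) ht' ht hm

end Circle

section Dynamics

variable {u : ℤ → ℝ} {v : ℝ → ℤ → ℝ} {D E : ℕ}
variable {F : ℝ → ℝ} {G : ℝ × ℝ → ℝ} {f : 𝕊 → 𝕊} {g : T2 → 𝕊} {Tm : T2 → T2}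
variable {ξ0 η0 : ℝ} {σ τ : ℤ}

lemma exists_rep_interval {φ : ℝ → ℝ} (hφ : Continuous φ) {a b w1 w2 : ℝ} (hab : a ≤ b)
    (h1 : φ a = w1) (h2 : φ b = w2) (hdist : w2 = w1 + 1 ∨ w2 = w1 - 1) (x : 𝕊) :
    ∃ t ∈ Icc a b, ((φ t : ℝ) : 𝕊) = x := by
  rcases hdist with hd | hd
  · obtain ⟨w, hw, hwx⟩ := exists_rep_Icc w1 x
    have hw' : w ∈ uIcc (φ a) (φ b) := by
      rw [h1, h2, hd]; exact mem_uIcc.mpr (Or.inl ⟨hw.1, hw.2⟩)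
    obtain ⟨t, ht, hφt⟩ := intermediate_value_uIcc hφ.continuousOn hw'
    rw [uIcc_of_le hab] at ht
    exact ⟨t, ht, by rw [hφt]; exact hwx⟩
  · obtain ⟨w, hw, hwx⟩ := exists_rep_Icc w2 x
    have hw' : w ∈ uIcc (φ a) (φ b) := by
      rw [h1, h2]
      refine mem_uIcc.mpr (Or.inr ⟨hw.1, ?_⟩)
      rw [hd] at hw
      linarith [hw.2]
    obtain ⟨t, ht, hφt⟩ := intermediate_value_uIcc hφ.continuousOn hw'
    rw [uIcc_of_le hab] at ht
    exact ⟨t, ht, by rw [hφt]; exact hwx⟩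

lemma sigma_dist (hσ : σ = 1 ∨ σ = -1) (k : ℤ) (ξ0 : ℝ) :
    ξ0 + σ * ((k+1 : ℤ) : ℝ) = (ξ0 + σ * k) + 1 ∨
      ξ0 + σ * ((k+1 : ℤ) : ℝ) = (ξ0 + σ * k) - 1 := by
  rcases hσ with rfl | rfl
  · left; push_cast; ring
  · right; push_cast; ring

lemma Tm_qmap (hTm : ∀ p, Tm p = (f p.1, g p)) (hf : ∀ t : ℝ, f (t : 𝕊) = ((F t : ℝ) : 𝕊))
    (hg : ∀ z : ℝ × ℝ, g ((z.1 : 𝕊), (z.2 : 𝕊)) = ((G z : ℝ) : 𝕊)) (z : ℝ × ℝ) :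
    Tm (qmap z) = qmap (F z.1, G z) := by
  rw [hTm]
  simp only [qmap]
  exact Prod.ext (hf z.1) (hg z)

lemma Tm_image_Rset (hTm : ∀ p, Tm p = (f p.1, g p))
    (hf : ∀ t : ℝ, f (t : 𝕊) = ((F t : ℝ) : 𝕊))
    (hg : ∀ z : ℝ × ℝ, g ((z.1 : 𝕊), (z.2 : 𝕊)) = ((G z : ℝ) : 𝕊))
    (hFc : Continuous F) (hGc : Continuous G)
    (hu : StrictMono u) (hvm : ∀ x, StrictMono (v x))
    (hFu : ∀ k : ℤ, F (u k) = ξ0 + σ * k) (hσ : σ = 1 ∨ σ = -1)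
    (hGv : ∀ (x : ℝ) (j : ℤ), G (x, v x j) = η0 + τ * j) (hτ : τ = 1 ∨ τ = -1)
    (k j : ℤ) : Tm '' Rset u v k j = univ := by
  apply eq_univ_of_forall
  rintro ⟨a, b⟩
  obtain ⟨t, ht, hta⟩ := exists_rep_interval hFc (hu (show k < k + 1 by omega)).le
    (hFu k) (hFu (k+1)) (sigma_dist hσ k ξ0) a
  have hGt : Continuous (fun s => G (t, s)) := hGc.comp (continuous_const.prodMk continuous_id)
  obtain ⟨s, hs, hsb⟩ := exists_rep_interval hGt (hvm t (show j < j + 1 by omega)).le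
    (hGv t j) (hGv t (j+1)) (sigma_dist hτ j η0) b
  refine ⟨qmap (t, s), ⟨(t, s), ⟨ht, hs⟩, rfl⟩, ?_⟩
  rw [Tm_qmap hTm hf hg]
  exact Prod.ext hta hsb

lemma eq_of_coe_eq_mem_Ioo {A w w' : ℝ} (hw : w ∈ Ioo A (A+1)) (hw' : w' ∈ Ioo A (A+1))
    (h : ((w : ℝ) : 𝕊) = w') : w = w' := by
  obtain ⟨m, hm⟩ := coe_eq_coe_iff.mp h
  have : |(m:ℝ)| < 1 := by
    rw [abs_lt]
    constructor
    · have := hw.2; have := hw'.1; linarith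
    · have := hw.1; have := hw'.2; linarith
  rw [int_eq_zero_of_abs_lt this, Int.cast_zero, add_zero] at hm
  exact hm.symm

lemma mono_map_Ioo {φ : ℝ → ℝ} (hm : StrictMono φ ∨ StrictAnti φ) {a b t : ℝ}
    (ht : t ∈ Ioo a b) :
    φ t ∈ Ioo (min (φ a) (φ b)) (min (φ a) (φ b) + (max (φ a) (φ b) - min (φ a) (φ b))) := by
  have : min (φ a) (φ b) + (max (φ a) (φ b) - min (φ a) (φ b)) = max (φ a) (φ b) := by ring
  rw [this]
  rcases hm with hm | hm
  · have h1 : φ a < φ t := hm ht.1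
    have h2 : φ t < φ b := hm ht.2
    exact ⟨lt_of_le_of_lt (min_le_left _ _) h1, lt_of_lt_of_le h2 (le_max_right _ _)⟩
  · have h1 : φ b < φ t := hm ht.2
    have h2 : φ t < φ a := hm ht.1
    exact ⟨lt_of_le_of_lt (min_le_right _ _) h1, lt_of_lt_of_le h2 (le_max_left _ _)⟩

lemma minmax_dist {w1 w2 : ℝ} (h : w2 = w1 + 1 ∨ w2 = w1 - 1) :
    max w1 w2 - min w1 w2 = 1 := by
  rcases h with rfl | rfl
  · rw [max_eq_right (by linarith), min_eq_left (by linarith)]; ring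
  · rw [max_eq_left (by linarith), min_eq_right (by linarith)]; ring

lemma Tm_injOn_qOpn (hTm : ∀ p, Tm p = (f p.1, g p))
    (hf : ∀ t : ℝ, f (t : 𝕊) = ((F t : ℝ) : 𝕊))
    (hg : ∀ z : ℝ × ℝ, g ((z.1 : 𝕊), (z.2 : 𝕊)) = ((G z : ℝ) : 𝕊))
    (hFmono : StrictMono F ∨ StrictAnti F)
    (hGmono : (∀ x : ℝ, StrictMono (fun s => G (x, s))) ∨
      (∀ x : ℝ, StrictAnti (fun s => G (x, s))))
    (hFu : ∀ k : ℤ, F (u k) = ξ0 + σ * k) (hσ : σ = 1 ∨ σ = -1)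
    (hGv : ∀ (x : ℝ) (j : ℤ), G (x, v x j) = η0 + τ * j) (hτ : τ = 1 ∨ τ = -1)
    (k j : ℤ) : Set.InjOn Tm (qmap '' Opn u v k j) := by
  rintro p ⟨z, hz, rfl⟩ p' ⟨z', hz', rfl⟩ hT
  rw [Tm_qmap hTm hf hg, Tm_qmap hTm hf hg] at hT
  have h1 : ((F z.1 : ℝ) : 𝕊) = ((F z'.1 : ℝ) : 𝕊) := congrArg Prod.fst hT
  -- F z.1 = F z'.1
  have hdF : max (F (u k)) (F (u (k+1))) - min (F (u k)) (F (u (k+1))) = 1 :=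
    minmax_dist ((hFu k) ▸ (hFu (k+1)) ▸ sigma_dist hσ k ξ0)
  have hFz : F z.1 = F z'.1 := by
    apply eq_of_coe_eq_mem_Ioo (A := min (F (u k)) (F (u (k+1))))
      (hdF ▸ mono_map_Ioo hFmono hz.1) (hdF ▸ mono_map_Ioo hFmono hz'.1) h1
  have hx : z.1 = z'.1 := by
    rcases hFmono with hm | hm
    · exact hm.injective hFz
    · exact hm.injective hFz
  have h2 : ((G z : ℝ) : 𝕊) = ((G z' : ℝ) : 𝕊) := congrArg Prod.snd hT
  set x := z.1 with hxdef
  have hGmono' : StrictMono (fun s => G (x, s)) ∨ StrictAnti (fun s => G (x, s)) := by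
    rcases hGmono with h | h
    · exact Or.inl (h x)
    · exact Or.inr (h x)
  have hdG : max (G (x, v x j)) (G (x, v x (j+1))) - min (G (x, v x j)) (G (x, v x (j+1))) = 1 :=
    minmax_dist ((hGv x j) ▸ (hGv x (j+1)) ▸ sigma_dist hτ j η0)
  have hz2 : G (x, z.2) ∈ Ioo (min (G (x, v x j)) (G (x, v x (j+1))))
      (min (G (x, v x j)) (G (x, v x (j+1))) + 1) := hdG ▸ mono_map_Ioo hGmono' hz.2
  have hz2' : G (x, z'.2) ∈ Ioo (min (G (x, v x j)) (G (x, v x (j+1))))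
      (min (G (x, v x j)) (G (x, v x (j+1))) + 1) := by
    have := hz'.2
    rw [← hx] at this
    exact hdG ▸ mono_map_Ioo hGmono' this
  have hGz : G (x, z.2) = G (x, z'.2) := by
    apply eq_of_coe_eq_mem_Ioo hz2 hz2'
    have e1 : (x, z.2) = z := rfl
    have e2 : (x, z'.2) = z' := by rw [hx]
    rw [e1, e2]
    exact h2
  have hs : z.2 = z'.2 := by
    rcases hGmono' with hm | hm
    · exact hm.injective hGz
    · exact hm.injective hGz
  have : z = z' := Prod.ext hx hs
  rw [this]

lemma coe_xi0 (hσ : σ = 1 ∨ σ = -1) (k : ℤ) : (((ξ0 + σ * k : ℝ)) : 𝕊) = ((ξ0 : ℝ) : 𝕊) := by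
  have : (ξ0 + σ * k : ℝ) = ξ0 + ((σ * k : ℤ) : ℝ) := by push_cast; ring
  rw [this]
  exact coe_add_int ξ0 (σ * k)

lemma Tm_frontier_Rset (hTm : ∀ p, Tm p = (f p.1, g p))
    (hf : ∀ t : ℝ, f (t : 𝕊) = ((F t : ℝ) : 𝕊))
    (hg : ∀ z : ℝ × ℝ, g ((z.1 : 𝕊), (z.2 : 𝕊)) = ((G z : ℝ) : 𝕊))
    (hu : StrictMono u) (huD : ∀ k, u (k + D) = u k + 1) (hD : 2 ≤ D)
    (hvc : ∀ j, Continuous (fun x => v x j)) (hvm : ∀ x, StrictMono (v x))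
    (hvE : ∀ x j, v x (j + E) = v x j + 1) (hE : 2 ≤ E)
    (hFu : ∀ k : ℤ, F (u k) = ξ0 + σ * k) (hσ : σ = 1 ∨ σ = -1)
    (hGv : ∀ (x : ℝ) (j : ℤ), G (x, v x j) = η0 + τ * j) (hτ : τ = 1 ∨ τ = -1)
    {x0 y0 : 𝕊} (hx0 : ((ξ0 : ℝ) : 𝕊) = x0) (hy0 : ((η0 : ℝ) : 𝕊) = y0)
    (k j : ℤ) : Tm '' frontier (Rset u v k j) ⊆ S0 x0 y0 := by
  rintro q ⟨p, hp, rfl⟩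
  have hfr : p ∈ Rset u v k j \ interior (Rset u v k j) := by
    rw [frontier, (rset_compact hu hvc k j).isClosed.closure_eq] at hp
    exact hp
  rw [interior_Rset_eq hu huD hD hvc hvm hvE hE k j] at hfr
  obtain ⟨⟨z, hz, rfl⟩, hnot⟩ := hfr
  have hzO : z ∉ Opn u v k j := fun h => hnot ⟨z, h, rfl⟩
  rw [Tm_qmap hTm hf hg]
  -- z is on the boundary of the region
  rcases eq_or_lt_of_le hz.1.1 with hbl | hbl
  · -- z.1 = u k
    left
    refine ⟨?_, trivial⟩
    show (((F z.1 : ℝ)) : 𝕊) ∈ ({x0} : Set 𝕊)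
    rw [← hbl, hFu k, coe_xi0 hσ, hx0]
    exact rfl
  rcases eq_or_lt_of_le hz.1.2 with hbr | hbr
  · left
    refine ⟨?_, trivial⟩
    show (((F z.1 : ℝ)) : 𝕊) ∈ ({x0} : Set 𝕊)
    rw [hbr, hFu (k+1), coe_xi0 hσ, hx0]
    exact rfl
  · -- z.1 interior, z.2 boundary
    have hsBd : z.2 = v z.1 j ∨ z.2 = v z.1 (j+1) := by
      by_contra hs
      push_neg at hs
      exact hzO ⟨⟨hbl, hbr⟩, lt_of_le_of_ne hz.2.1 (Ne.symm hs.1), lt_of_le_of_ne hz.2.2 hs.2⟩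
    right
    refine ⟨trivial, ?_⟩
    show (((G z : ℝ)) : 𝕊) ∈ ({y0} : Set 𝕊)
    have hzz : z = (z.1, z.2) := rfl
    rcases hsBd with hsb | hsb
    · rw [hzz, hsb, hGv z.1 j, coe_xi0 hτ, hy0]; exact rfl
    · rw [hzz, hsb, hGv z.1 (j+1), coe_xi0 hτ, hy0]; exact rfl

lemma f_image_Iset (hf : ∀ t : ℝ, f (t : 𝕊) = ((F t : ℝ) : 𝕊)) (hFc : Continuous F)
    (hu : StrictMono u) (hFu : ∀ k : ℤ, F (u k) = ξ0 + σ * k) (hσ : σ = 1 ∨ σ = -1)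
    (k : ℤ) : f '' Iset u k = univ := by
  apply eq_univ_of_forall
  intro a
  obtain ⟨t, ht, hta⟩ := exists_rep_interval hFc (hu (show k < k + 1 by omega)).le
    (hFu k) (hFu (k+1)) (sigma_dist hσ k ξ0) a
  exact ⟨(t : 𝕊), ⟨t, ht, rfl⟩, by rw [hf t]; exact hta⟩

lemma fst_image_qOpn (hvm : ∀ x, StrictMono (v x)) (k j : ℤ) :
    Prod.fst '' (qmap '' Opn u v k j) = (fun t : ℝ => (t : 𝕊)) '' Ioo (u k) (u (k+1)) := by
  apply Subset.antisymm
  · rintro a ⟨p, ⟨z, hz, rfl⟩, rfl⟩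
    exact ⟨z.1, hz.1, rfl⟩
  · rintro a ⟨t, ht, rfl⟩
    refine ⟨qmap (t, (v t j + v t (j+1))/2), ⟨(t, (v t j + v t (j+1))/2), ⟨ht, ?_⟩, rfl⟩, rfl⟩
    have := hvm t (show j < j + 1 by omega)
    constructor <;> simp only [] <;> linarith

lemma fst_image_Rset (hvm : ∀ x, StrictMono (v x)) (k j : ℤ) :
    Prod.fst '' Rset u v k j = Iset u k := by
  apply Subset.antisymm
  · rintro a ⟨p, ⟨z, hz, rfl⟩, rfl⟩
    exact ⟨z.1, hz.1, rfl⟩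
  · rintro a ⟨t, ht, rfl⟩
    refine ⟨qmap (t, v t j), ⟨(t, v t j), ⟨ht, ?_⟩, rfl⟩, rfl⟩
    exact ⟨le_refl _, (hvm t (show j < j + 1 by omega)).le⟩

end Dynamics

lemma abstract_markov
    (f : 𝕊 → 𝕊) (g : T2 → 𝕊) (Tm : T2 → T2)
    (hTm : ∀ p, Tm p = (f p.1, g p))
    (F : ℝ → ℝ) (G : ℝ × ℝ → ℝ)
    (hf : ∀ t : ℝ, f (t : 𝕊) = ((F t : ℝ) : 𝕊))
    (hg : ∀ z : ℝ × ℝ, g ((z.1 : 𝕊), (z.2 : 𝕊)) = ((G z : ℝ) : 𝕊))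
    (hFc : Continuous F) (hGc : Continuous G)
    (hFmono : StrictMono F ∨ StrictAnti F)
    (hGmono : (∀ x : ℝ, StrictMono (fun s => G (x, s))) ∨
      (∀ x : ℝ, StrictAnti (fun s => G (x, s))))
    (x0 y0 : 𝕊) (ξ0 η0 : ℝ) (hx0 : ((ξ0 : ℝ) : 𝕊) = x0) (hy0 : ((η0 : ℝ) : 𝕊) = y0)
    (σ τ : ℤ) (hσ : σ = 1 ∨ σ = -1) (hτ : τ = 1 ∨ τ = -1)
    (D E : ℕ) (hD : 2 ≤ D) (hE : 2 ≤ E)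
    (u : ℤ → ℝ) (hu : StrictMono u) (huD : ∀ k, u (k + D) = u k + 1)
    (hFu : ∀ k : ℤ, F (u k) = ξ0 + σ * k)
    (v : ℝ → ℤ → ℝ) (hvc : ∀ j, Continuous (fun x => v x j))
    (hvm : ∀ x, StrictMono (v x)) (hvE : ∀ x j, v x (j + E) = v x j + 1)
    (hGv : ∀ (x : ℝ) (j : ℤ), G (x, v x j) = η0 + τ * j) :
    ∃ R : Finset (Set T2),
      IsProperPartition R ∧
      (∀ A ∈ R, Tm '' A = Set.univ ∧ Set.InjOn Tm (interior A)) ∧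
      (∀ A ∈ R, ∀ B ∈ R,
        (Prod.fst '' interior A) ∩ (Prod.fst '' interior B) = ∅ ∨
          Prod.fst '' interior A = Prod.fst '' interior B) ∧
      (∀ A ∈ R, Tm '' frontier A ⊆ S0 x0 y0) ∧
      IsMarkovPartition f (projOf R) := by
  classical
  refine ⟨(Finset.range D ×ˢ Finset.range E).image
      (fun kj : ℕ × ℕ => Rset u v kj.1 kj.2), ?_, ?_, ?_, ?_, ?_⟩
  case _ => -- IsProperPartition
    refine ⟨?_, ?_, ?_⟩
    · intro A hA
      obtain ⟨⟨k, j⟩, _, rfl⟩ := Finset.mem_image.mp hA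
      exact closure_interior_Rset hu huD hD hvc hvm hvE hE k j
    · apply eq_univ_of_forall
      intro p
      obtain ⟨k, j, hk, hj, hp⟩ := rset_cover hu huD hD hvm hvE hE p
      simp only [mem_iUnion]
      refine ⟨Rset u v k j, ?_, hp⟩
      exact Finset.mem_image.mpr ⟨(k, j),
        Finset.mem_product.mpr ⟨Finset.mem_range.mpr (by omega), Finset.mem_range.mpr (by omega)⟩, rfl⟩
    · intro A hA B hB hAB
      obtain ⟨⟨k, j⟩, hkj, rfl⟩ := Finset.mem_image.mp hA
      obtain ⟨⟨k', j'⟩, hkj', rfl⟩ := Finset.mem_image.mp hB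
      obtain ⟨hk, hj⟩ := Finset.mem_product.mp hkj
      obtain ⟨hk', hj'⟩ := Finset.mem_product.mp hkj'
      rw [Finset.mem_range] at hk hj hk' hj'
      have hne : (k : ℤ) ≠ (k' : ℤ) ∨ (j : ℤ) ≠ (j' : ℤ) := by
        by_contra h
        push_neg at h
        have : k = k' ∧ j = j' := by omega
        exact hAB (by rw [this.1, this.2])
      rw [interior_Rset_eq hu huD hD hvc hvm hvE hE,
        interior_Rset_eq hu huD hD hvc hvm hvE hE]
      exact opn_image_disjoint hu huD hD hvm hvE (by omega) (by exact_mod_cast hk)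
        (by omega) (by exact_mod_cast hk') (by omega) (by exact_mod_cast hj)
        (by omega) (by exact_mod_cast hj') hne
  case _ => -- onto and injective
    intro A hA
    obtain ⟨⟨k, j⟩, _, rfl⟩ := Finset.mem_image.mp hA
    constructor
    · exact Tm_image_Rset hTm hf hg hFc hGc hu hvm hFu hσ hGv hτ k j
    · rw [interior_Rset_eq hu huD hD hvc hvm hvE hE]
      exact Tm_injOn_qOpn hTm hf hg hFmono hGmono hFu hσ hGv hτ k j
  case _ => -- projections agree or disjoint
    intro A hA B hB
    obtain ⟨⟨k, j⟩, hkj, rfl⟩ := Finset.mem_image.mp hA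
    obtain ⟨⟨k', j'⟩, hkj', rfl⟩ := Finset.mem_image.mp hB
    obtain ⟨hk, hj⟩ := Finset.mem_product.mp hkj
    obtain ⟨hk', hj'⟩ := Finset.mem_product.mp hkj'
    rw [Finset.mem_range] at hk hj hk' hj'
    rw [interior_Rset_eq hu huD hD hvc hvm hvE hE,
      interior_Rset_eq hu huD hD hvc hvm hvE hE,
      fst_image_qOpn hvm, fst_image_qOpn hvm]
    rcases eq_or_ne k k' with rfl | hkk
    · right; rfl
    · left
      exact Ioo_image_disjoint hu huD (by omega) (by exact_mod_cast hk)
        (by omega) (by exact_mod_cast hk') (by exact_mod_cast hkk)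
  case _ => -- boundary
    intro A hA
    obtain ⟨⟨k, j⟩, _, rfl⟩ := Finset.mem_image.mp hA
    exact Tm_frontier_Rset hTm hf hg hu huD hD hvc hvm hvE hE hFu hσ hGv hτ hx0 hy0 k j
  case _ => -- Markov partition downstairs
    have hproj : projOf ((Finset.range D ×ˢ Finset.range E).image
        (fun kj : ℕ × ℕ => Rset u v kj.1 kj.2)) =
        (Finset.range D).image (fun k : ℕ => Iset u k) := by
      apply Finset.ext
      intro A
      rw [projOf]
      simp only [Finset.mem_image, Finset.mem_product, Finset.mem_range]
      constructor
      · rintro ⟨B, ⟨⟨k, j⟩, ⟨hk, hj⟩, rfl⟩, rfl⟩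
        exact ⟨k, hk, (fst_image_Rset hvm k j).symm⟩
      · rintro ⟨k, hk, rfl⟩
        exact ⟨Rset u v k 0, ⟨(k, 0), ⟨hk, by omega⟩, rfl⟩, fst_image_Rset hvm k 0⟩
    rw [hproj]
    constructor
    · refine ⟨?_, ?_, ?_⟩
      · intro A hA
        obtain ⟨k, _, rfl⟩ := Finset.mem_image.mp hA
        exact closure_interior_Iset hu huD hD k
      · apply eq_univ_of_forall
        intro p
        obtain ⟨k, hk, hp⟩ := Iset_cover hu huD hD p
        simp only [mem_iUnion]
        exact ⟨Iset u k, Finset.mem_image.mpr ⟨k, Finset.mem_range.mpr (by omega), rfl⟩, hp⟩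
      · intro A hA B hB hAB
        obtain ⟨k, hk, rfl⟩ := Finset.mem_image.mp hA
        obtain ⟨k', hk', rfl⟩ := Finset.mem_image.mp hB
        rw [Finset.mem_range] at hk hk'
        have hne : (k : ℤ) ≠ (k' : ℤ) := by
          intro h
          exact hAB (by rw [show k = k' by omega])
        rw [interior_Iset_eq hu huD hD, interior_Iset_eq hu huD hD]
        exact Ioo_image_disjoint hu huD (by omega) (by exact_mod_cast hk)
          (by omega) (by exact_mod_cast hk') hne
    · intro A hA B hB _
      obtain ⟨k, _, rfl⟩ := Finset.mem_image.mp hA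
      rw [f_image_Iset hf hFc hu hFu hσ k]
      exact subset_univ _

section Analytic

lemma pos_or_neg_of_ne_zero {h : ℝ → ℝ} (hc : Continuous h) (h0 : ∀ t, h t ≠ 0) :
    (∀ t, 0 < h t) ∨ (∀ t, h t < 0) := by
  rcases lt_or_gt_of_ne (h0 0) with hneg | hpos
  · right
    intro t
    by_contra hge
    push_neg at hge
    have : (0:ℝ) ∈ uIcc (h 0) (h t) := mem_uIcc.mpr (Or.inl ⟨hneg.le, hge⟩)
    obtain ⟨r, _, hr⟩ := intermediate_value_uIcc hc.continuousOn this
    exact h0 r hr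
  · left
    intro t
    by_contra hge
    push_neg at hge
    have : (0:ℝ) ∈ uIcc (h 0) (h t) := mem_uIcc.mpr (Or.inr ⟨hge, hpos.le⟩)
    obtain ⟨r, _, hr⟩ := intermediate_value_uIcc hc.continuousOn this
    exact h0 r hr

lemma pos_or_neg_of_ne_zero2 {h : ℝ × ℝ → ℝ} (hc : Continuous h) (h0 : ∀ z, h z ≠ 0) :
    (∀ z, 0 < h z) ∨ (∀ z, h z < 0) := by
  have key : ∀ z z' : ℝ × ℝ, 0 < h z → 0 < h z' ∨ (0 < h z' ∨ h z' < 0) → 0 < h z' → True :=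
    fun _ _ _ _ _ => trivial
  have seg : ∀ z z' : ℝ × ℝ, (0 < h z ↔ 0 < h z') := by
    intro z z'
    set φ : ℝ → ℝ := fun r => h ((1-r) * z.1 + r * z'.1, (1-r) * z.2 + r * z'.2) with hφ
    have hφc : Continuous φ := by
      apply hc.comp
      apply Continuous.prodMk <;> continuity
    have hφ0 : ∀ r, φ r ≠ 0 := fun r => h0 _
    have h01 : φ 0 = h z := by simp [hφ]
    have h11 : φ 1 = h z' := by simp [hφ]
    rcases pos_or_neg_of_ne_zero hφc hφ0 with hp | hn
    · constructor <;> intro _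
      · rw [← h11]; exact hp 1
      · rw [← h01]; exact hp 0
    · constructor <;> intro hx
      · exact absurd (h01 ▸ hn 0) (by linarith)
      · exact absurd (h11 ▸ hn 1) (by linarith)
  rcases lt_or_gt_of_ne (h0 (0,0)) with hneg | hpos
  · right
    intro z
    rcases lt_or_gt_of_ne (h0 z) with h | h
    · exact h
    · exact absurd ((seg z (0,0)).mp h) (by linarith)
  · left
    exact fun z => (seg (0,0) z).mp hpos

lemma growth_of_deriv_ge {φ : ℝ → ℝ} (hd : Differentiable ℝ φ) {c : ℝ} (hc : 0 < c)
    (hφ' : ∀ t, 1 ≤ c * deriv φ t) {a b : ℝ} (hab : a ≤ b) :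
    φ a + (b - a) / c ≤ φ b := by
  set ψ : ℝ → ℝ := fun t => φ t - t / c with hψ
  have hψd : Differentiable ℝ ψ := hd.sub (differentiable_id.div_const c)
  have hψ' : ∀ t, 0 ≤ deriv ψ t := by
    intro t
    have : deriv ψ t = deriv φ t - 1 / c := by
      have hh : HasDerivAt ψ (deriv φ t - 1/c) t := by
        have h1 : HasDerivAt (fun y : ℝ => y / c) (1 / c) t := by
          simpa using (hasDerivAt_id t).div_const c
        exact ((hd t).hasDerivAt.sub h1)
      exact hh.deriv
    rw [this]
    have := hφ' t
    rw [sub_nonneg, div_le_iff₀ hc]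
    linarith
  have := monotone_of_deriv_nonneg hψd hψ' hab
  rw [hψ] at this
  simp only at this
  have hdiv : (b - a) / c = b / c - a / c := by ring
  linarith [this]

lemma surj_of_deriv_ge {φ : ℝ → ℝ} (hd : Differentiable ℝ φ) {c : ℝ} (hc : 0 < c)
    (hφ' : ∀ t, 1 ≤ c * deriv φ t) : Function.Surjective φ := by
  intro w
  set a : ℝ := min 0 (c * (w - φ 0)) with ha
  set b : ℝ := max 0 (c * (w - φ 0)) with hb
  have hab : a ≤ b := min_le_max
  have hfa : φ a ≤ w := by
    have h1 := growth_of_deriv_ge hd hc hφ' (min_le_left 0 (c * (w - φ 0)))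
    -- φ a + (0 - a)/c ≤ φ 0
    have h2 : a ≤ c * (w - φ 0) := min_le_right _ _
    have h3 : a / c ≤ w - φ 0 := by
      rw [div_le_iff₀ hc]
      calc a ≤ c * (w - φ 0) := h2
      _ = (w - φ 0) * c := by ring
    have h4 : (0 - a)/c = -(a/c) := by ring
    rw [h4] at h1
    linarith
  have hfb : w ≤ φ b := by
    have h1 := growth_of_deriv_ge hd hc hφ' (le_max_left 0 (c * (w - φ 0)))
    have h2 : c * (w - φ 0) ≤ b := le_max_right _ _
    have h3 : w - φ 0 ≤ b / c := by
      rw [le_div_iff₀ hc]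
      calc (w - φ 0) * c = c * (w - φ 0) := by ring
      _ ≤ b := h2
    have h4 : (b - 0)/c = b/c := by ring
    rw [h4] at h1
    linarith
  obtain ⟨t, _, ht⟩ := intermediate_value_Icc hab (hd.continuous.continuousOn)
    (⟨hfa, hfb⟩ : w ∈ Icc (φ a) (φ b))
  exact ⟨t, ht⟩

lemma int_valued_const2 {h : ℝ × ℝ → ℝ} (hc : Continuous h) (hint : ∀ z, ∃ k : ℤ, h z = k)
    (z z' : ℝ × ℝ) : h z = h z' := by
  set φ : ℝ → ℝ := fun r => h ((1-r) * z.1 + r * z'.1, (1-r) * z.2 + r * z'.2) with hφ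
  have hφc : Continuous φ := by
    apply hc.comp
    apply Continuous.prodMk <;> continuity
  have h01 : φ 0 = h z := by simp [hφ]
  have h11 : φ 1 = h z' := by simp [hφ]
  have := int_valued_const hφc (fun r => hint _) 0 1
  rw [h01, h11] at this
  exact this

end Analytic

section Branch

lemma one_lt_inv_c {c : ℝ} (hc0 : 0 < c) (hc1 : c < 1) : 1 < 1 / c :=
  (one_lt_div hc0).mpr hc1

lemma circle_branch_data {F : ℝ → ℝ} {c : ℝ} (hc0 : 0 < c) (hc1 : c < 1)
    (hFdiff : Differentiable ℝ F)
    (hcase : (∀ t, 1 ≤ c * deriv F t) ∨ (∀ t, 1 ≤ c * -deriv F t))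
    (hper : ∀ t, ∃ k : ℤ, F (t + 1) - F t = k)
    (ξ0 : ℝ) :
    ∃ (σ : ℤ) (D : ℕ) (u : ℤ → ℝ), (σ = 1 ∨ σ = -1) ∧ 2 ≤ D ∧ StrictMono u ∧
      (∀ k : ℤ, u (k + D) = u k + 1) ∧ (∀ k : ℤ, F (u k) = ξ0 + σ * k) ∧
      (StrictMono F ∨ StrictAnti F) := by
  have hFc : Continuous F := hFdiff.continuous
  have hdc : ∀ t t', F (t + 1) - F t = F (t' + 1) - F t' := by
    intro t t'
    apply int_valued_const (by fun_prop) hper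
  obtain ⟨d, hd0⟩ := hper 0
  have hd : ∀ t, F (t + 1) - F t = d := fun t => (hdc t 0).trans hd0
  rcases hcase with hpos | hneg
  · -- F increasing
    have hmono : StrictMono F := strictMono_of_deriv_pos (fun t => by
      have := hpos t; nlinarith)
    have hsurj : Function.Surjective F := surj_of_deriv_ge hFdiff hc0 hpos
    have hgrow := growth_of_deriv_ge hFdiff hc0 hpos (show (0:ℝ) ≤ 1 by norm_num)
    have hinv := one_lt_inv_c hc0 hc1
    have hd2 : (2:ℤ) ≤ d := by
      have h2 : (d:ℝ) = F 1 - F 0 := by rw [← hd 0]; norm_num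
      have h3 : (1:ℝ) < d := by
        rw [h2]
        have : F 0 + (1 - 0)/c ≤ F 1 := hgrow
        have h4 : (1:ℝ) - 0 = 1 := by norm_num
        rw [h4] at this
        linarith [this, hinv]
      have : (1:ℤ) < d := by exact_mod_cast h3
      omega
    set u : ℤ → ℝ := fun k => (hsurj (ξ0 + k)).choose with hu_def
    have hFu : ∀ k : ℤ, F (u k) = ξ0 + k := fun k => (hsurj (ξ0 + k)).choose_spec
    refine ⟨1, d.natAbs, u, Or.inl rfl, by omega, ?_, ?_, ?_, Or.inl hmono⟩
    · apply strictMono_int_of_lt_succ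
      intro k
      have : F (u k) < F (u (k+1)) := by rw [hFu, hFu]; push_cast; linarith
      exact hmono.lt_iff_lt.mp this
    · intro k
      apply hmono.injective
      rw [hFu]
      have h1 : F (u k + 1) = F (u k) + d := by have := hd (u k); linarith
      rw [h1, hFu]
      have hna : ((d.natAbs : ℤ) : ℝ) = (d : ℝ) := by
        have h : (d.natAbs : ℤ) = d := by omega
        exact_mod_cast congrArg (fun x : ℤ => (x:ℝ)) h
      push_cast
      push_cast at hna
      linarith
    · intro k
      rw [hFu]
      push_cast
      ring
  · -- F decreasing
    have hmono : StrictAnti F := strictAnti_of_deriv_neg (fun t => by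
      have := hneg t; nlinarith)
    have hFdiff' : Differentiable ℝ (fun t => -F t) := hFdiff.neg
    have hneg' : ∀ t, 1 ≤ c * deriv (fun t => -F t) t := by
      intro t
      rw [deriv.fun_neg]
      exact hneg t
    have hsurj' : Function.Surjective (fun t => -F t) := surj_of_deriv_ge hFdiff' hc0 hneg'
    have hsurj : Function.Surjective F := by
      intro w
      obtain ⟨t, ht⟩ := hsurj' (-w)
      exact ⟨t, by simp only [] at ht; linarith⟩
    have hgrow := growth_of_deriv_ge hFdiff' hc0 hneg' (show (0:ℝ) ≤ 1 by norm_num)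
    have hinv := one_lt_inv_c hc0 hc1
    have hd2 : d ≤ -2 := by
      have h2 : (d:ℝ) = F 1 - F 0 := by rw [← hd 0]; norm_num
      have h3 : (d : ℝ) < -1 := by
        rw [h2]
        have : -F 0 + (1 - 0)/c ≤ -F 1 := hgrow
        have h4 : (1:ℝ) - 0 = 1 := by norm_num
        rw [h4] at this
        linarith [this, hinv]
      have : (d:ℤ) < -1 := by exact_mod_cast h3
      omega
    set u : ℤ → ℝ := fun k => (hsurj (ξ0 - k)).choose with hu_def
    have hFu : ∀ k : ℤ, F (u k) = ξ0 - k := fun k => (hsurj (ξ0 - k)).choose_spec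
    refine ⟨-1, d.natAbs, u, Or.inr rfl, by omega, ?_, ?_, ?_, Or.inr hmono⟩
    · apply strictMono_int_of_lt_succ
      intro k
      have : F (u (k+1)) < F (u k) := by rw [hFu, hFu]; push_cast; linarith
      exact hmono.lt_iff_gt.mp this
    · intro k
      apply hmono.injective
      rw [hFu]
      have h1 : F (u k + 1) = F (u k) + d := by have := hd (u k); linarith
      rw [h1, hFu]
      have hna : ((d.natAbs : ℤ) : ℝ) = -(d : ℝ) := by
        have h : (d.natAbs : ℤ) = -d := by omega
        exact_mod_cast congrArg (fun x : ℤ => (x:ℝ)) h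
      push_cast
      push_cast at hna
      linarith
    · intro k
      rw [hFu]
      push_cast
      ring

lemma fiber_branch_pos {G : ℝ × ℝ → ℝ} {Gy : ℝ × ℝ → ℝ} {c : ℝ} (hc0 : 0 < c) (hc1 : c < 1)
    (hGc : Continuous G)
    (hGd : ∀ x s : ℝ, HasDerivAt (fun s' => G (x, s')) (Gy (x, s)) s)
    (hpos : ∀ z, 1 ≤ c * Gy z)
    (hper : ∀ z : ℝ × ℝ, ∃ k : ℤ, G (z.1, z.2 + 1) - G z = k)
    (η0 : ℝ) :
    ∃ (E : ℕ) (v : ℝ → ℤ → ℝ), 2 ≤ E ∧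
      (∀ j, Continuous (fun x => v x j)) ∧ (∀ x, StrictMono (v x)) ∧
      (∀ x j, v x (j + E) = v x j + 1) ∧ (∀ (x : ℝ) (j : ℤ), G (x, v x j) = η0 + j) := by
  have hGdiffy : ∀ x : ℝ, Differentiable ℝ (fun s => G (x, s)) :=
    fun x s => (hGd x s).differentiableAt
  have hderiv : ∀ x s : ℝ, deriv (fun s' => G (x, s')) s = Gy (x, s) :=
    fun x s => (hGd x s).deriv
  have hec : ∀ z z' : ℝ × ℝ, G (z.1, z.2 + 1) - G z = G (z'.1, z'.2 + 1) - G z' := by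
    intro z z'
    apply int_valued_const2 (by fun_prop) hper
  obtain ⟨e, he0⟩ := hper (0, 0)
  have he : ∀ z : ℝ × ℝ, G (z.1, z.2 + 1) - G z = e := fun z => (hec z (0,0)).trans he0
  have hmono : ∀ x, StrictMono (fun s => G (x, s)) := fun x =>
    strictMono_of_deriv_pos (fun s => by
      rw [hderiv]; have := hpos (x, s); nlinarith)
  have hpos' : ∀ x s, 1 ≤ c * deriv (fun s' => G (x, s')) s := fun x s => by
    rw [hderiv]; exact hpos (x, s)
  have hsurj : ∀ x, Function.Surjective (fun s => G (x, s)) := fun x =>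
    surj_of_deriv_ge (hGdiffy x) hc0 (hpos' x)
  have hgrow : ∀ x a b, a ≤ b → G (x, a) + (b - a)/c ≤ G (x, b) := fun x a b hab =>
    growth_of_deriv_ge (hGdiffy x) hc0 (hpos' x) hab
  have hdist0 : ∀ x a b, a ≤ b → |a - b| ≤ c * |G (x, a) - G (x, b)| := by
    intro x a b hab
    have hg := hgrow x a b hab
    have h1 : 0 ≤ (b - a)/c := div_nonneg (by linarith) hc0.le
    have h2 : 0 ≤ G (x, b) - G (x, a) := by linarith
    rw [abs_sub_comm, abs_of_nonneg (by linarith : (0:ℝ) ≤ b - a),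
      abs_sub_comm, abs_of_nonneg h2]
    have h3 : (b - a)/c ≤ G (x, b) - G (x, a) := by linarith
    rw [div_le_iff₀ hc0] at h3
    nlinarith
  have hdist : ∀ x a b, |a - b| ≤ c * |G (x, a) - G (x, b)| := by
    intro x a b
    rcases le_total a b with hab | hab
    · exact hdist0 x a b hab
    · rw [abs_sub_comm, abs_sub_comm (G (x,a))]
      exact hdist0 x b a hab
  have hinv := one_lt_inv_c hc0 hc1
  have he2 : (2:ℤ) ≤ e := by
    have h2 : (e:ℝ) = G (0, 0 + 1) - G ((0:ℝ), (0:ℝ)) := (he ((0:ℝ),(0:ℝ))).symm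
    have h3 := hgrow 0 0 1 (by norm_num)
    have h4 : (1:ℝ) < e := by
      rw [h2]
      have h5 : (1:ℝ) - 0 = 1 := by norm_num
      rw [h5] at h3
      have h6 : G ((0:ℝ), (0:ℝ) + 1) = G ((0:ℝ), (1:ℝ)) := by norm_num
      rw [h6]
      linarith
    have : (1:ℤ) < e := by exact_mod_cast h4
    omega
  set v : ℝ → ℤ → ℝ := fun x j => (hsurj x (η0 + j)).choose with hv_def
  have hGv : ∀ x (j : ℤ), G (x, v x j) = η0 + j := fun x j => (hsurj x (η0 + j)).choose_spec
  have hvc : ∀ j : ℤ, Continuous (fun x => v x j) := by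
    intro j
    rw [continuous_iff_continuousAt]
    intro x₀
    set b := v x₀ j with hb
    have key : ∀ x, |v x j - b| ≤ c * |G (x₀, b) - G (x, b)| := by
      intro x
      have h1 := hdist x (v x j) b
      have h2 : G (x, v x j) = G (x₀, b) := by rw [hGv, hb, hGv]
      rw [h2] at h1
      exact h1
    have hGb : Tendsto (fun x => c * |G (x₀, b) - G (x, b)|) (𝓝 x₀) (𝓝 0) := by
      have hcb : Continuous (fun x => G (x, b)) := hGc.comp (continuous_id.prodMk continuous_const)
      have h1 : Tendsto (fun x => G (x₀, b) - G (x, b)) (𝓝 x₀) (𝓝 0) := by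
        have := (tendsto_const_nhds (x := G (x₀, b)) (f := 𝓝 x₀)).sub (hcb.tendsto x₀)
        simpa using this
      have := (h1.abs).const_mul c
      simpa using this
    show ContinuousAt (fun x => v x j) x₀
    unfold ContinuousAt
    rw [tendsto_iff_dist_tendsto_zero]
    apply squeeze_zero (fun x => dist_nonneg) (fun x => ?_) hGb
    rw [Real.dist_eq]
    exact key x
  refine ⟨e.natAbs, v, by omega, hvc, ?_, ?_, ?_⟩
  · intro x
    apply strictMono_int_of_lt_succ
    intro k
    have : G (x, v x k) < G (x, v x (k+1)) := by rw [hGv, hGv]; push_cast; linarith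
    exact ((hmono x).lt_iff_lt).mp this
  · intro x k
    apply (hmono x).injective
    show G (x, v x (k + e.natAbs)) = G (x, v x k + 1)
    have h1 : G (x, v x k + 1) = G (x, v x k) + e := by have := he (x, v x k); linarith
    rw [h1, hGv, hGv]
    have hna : ((e.natAbs : ℤ) : ℝ) = (e : ℝ) := by
      have h : (e.natAbs : ℤ) = e := by omega
      exact_mod_cast congrArg (fun x : ℤ => (x:ℝ)) h
    push_cast
    push_cast at hna
    linarith
  · exact hGv

lemma fiber_branch_data {G : ℝ × ℝ → ℝ} {Gy : ℝ × ℝ → ℝ} {c : ℝ} (hc0 : 0 < c) (hc1 : c < 1)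
    (hGc : Continuous G)
    (hGd : ∀ x s : ℝ, HasDerivAt (fun s' => G (x, s')) (Gy (x, s)) s)
    (hcase : (∀ z, 1 ≤ c * Gy z) ∨ (∀ z, 1 ≤ c * -Gy z))
    (hper : ∀ z : ℝ × ℝ, ∃ k : ℤ, G (z.1, z.2 + 1) - G z = k)
    (η0 : ℝ) :
    ∃ (τ : ℤ) (E : ℕ) (v : ℝ → ℤ → ℝ), (τ = 1 ∨ τ = -1) ∧ 2 ≤ E ∧
      (∀ j, Continuous (fun x => v x j)) ∧ (∀ x, StrictMono (v x)) ∧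
      (∀ x j, v x (j + E) = v x j + 1) ∧ (∀ (x : ℝ) (j : ℤ), G (x, v x j) = η0 + τ * j) ∧
      ((∀ x : ℝ, StrictMono (fun s => G (x, s))) ∨
        (∀ x : ℝ, StrictAnti (fun s => G (x, s)))) := by
  rcases hcase with hpos | hneg
  · obtain ⟨E, v, hE, hvc, hvm, hvE, hGv⟩ :=
      fiber_branch_pos hc0 hc1 hGc hGd hpos hper η0
    refine ⟨1, E, v, Or.inl rfl, hE, hvc, hvm, hvE, fun x j => by rw [hGv]; push_cast; ring, ?_⟩
    left
    intro x
    exact strictMono_of_deriv_pos (fun s => by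
      rw [(hGd x s).deriv]; have := hpos (x, s); nlinarith)
  · have hGd' : ∀ x s : ℝ, HasDerivAt (fun s' => -G (x, s')) (-Gy (x, s)) s :=
      fun x s => (hGd x s).neg
    obtain ⟨E, v, hE, hvc, hvm, hvE, hGv⟩ :=
      fiber_branch_pos (G := fun z => -G z) (Gy := fun z => -Gy z) hc0 hc1 hGc.neg
        (fun x s => hGd' x s) (fun z => hneg z)
        (fun z => by obtain ⟨k, hk⟩ := hper z; exact ⟨-k, by push_cast; linarith⟩) (-η0)
    refine ⟨-1, E, v, Or.inr rfl, hE, hvc, hvm, hvE, fun x j => ?_, ?_⟩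
    · have := hGv x j
      push_cast
      linarith
    · right
      intro x
      exact strictAnti_of_deriv_neg (fun s => by
        rw [(hGd x s).deriv]; have := hneg (x, s); nlinarith)

end Branch

section Skew

lemma skew_main (S : SkewSystem) (x0 y0 : 𝕊) :
    ∃ R : Finset (Set T2),
      IsProperPartition R ∧
      (∀ A ∈ R, S.T '' A = Set.univ ∧ Set.InjOn S.T (interior A)) ∧
      (∀ A ∈ R, ∀ B ∈ R,
        (Prod.fst '' interior A) ∩ (Prod.fst '' interior B) = ∅ ∨
          Prod.fst '' interior A = Prod.fst '' interior B) ∧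
      (∀ A ∈ R, S.T '' frontier A ⊆ S0 x0 y0) ∧
      IsMarkovPartition S.f (projOf R) := by
  obtain ⟨c, hc0', hc1, hexp⟩ := S.expanding
  have hGsm : ContDiff ℝ 2 S.G := contDiff_snd.comp S.smooth
  have hFsm : ContDiff ℝ 2 S.F := by
    have h1 : ContDiff ℝ 2 (fun t : ℝ => ((t, (0:ℝ)) : ℝ × ℝ)) :=
      contDiff_id.prodMk contDiff_const
    have h2 : ContDiff ℝ 2 (fun t : ℝ => (S.F t, S.G (t, 0))) := S.smooth.comp h1
    exact contDiff_fst.comp h2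
  have hFdiff : Differentiable ℝ S.F := hFsm.differentiable two_ne_zero
  have hGdiff : Differentiable ℝ S.G := hGsm.differentiable two_ne_zero
  have hpairD : ∀ z : ℝ × ℝ, HasFDerivAt (fun w : ℝ × ℝ => (S.F w.1, S.G w))
      (((deriv S.F z.1) • (ContinuousLinearMap.fst ℝ ℝ ℝ)).prod (fderiv ℝ S.G z)) z := by
    intro z
    exact ((hFdiff z.1).hasDerivAt.comp_hasFDerivAt z hasFDerivAt_fst).prodMk
      (hGdiff z).hasFDerivAt
  have happly : ∀ (z v : ℝ × ℝ), (fderiv ℝ (fun w : ℝ × ℝ => (S.F w.1, S.G w)) z) v =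
      (deriv S.F z.1 * v.1, fderiv ℝ S.G z v) := by
    intro z v
    rw [(hpairD z).fderiv]
    simp [ContinuousLinearMap.prod_apply, ContinuousLinearMap.smul_apply, smul_eq_mul]
  have hexp' : ∀ z v : ℝ × ℝ, ‖v‖ ≤ c * ‖(deriv S.F z.1 * v.1, fderiv ℝ S.G z v)‖ := by
    intro z v
    have := hexp z v
    rwa [happly] at this
  have hGy : ∀ z : ℝ × ℝ, 1 ≤ c * |fderiv ℝ S.G z (0, 1)| := by
    intro z
    have h := hexp' z (0, 1)
    rw [Prod.norm_def, Prod.norm_def] at h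
    simp only [norm_zero, norm_one, mul_zero, Real.norm_eq_abs, abs_zero] at h
    rw [max_eq_right zero_le_one, max_eq_right (abs_nonneg _)] at h
    exact h
  have hcpos : 0 < c := by
    rcases hc0'.lt_or_eq with h | h
    · exact h
    · exfalso
      have := hGy (0, 0)
      rw [← h, zero_mul] at this
      linarith
  have hGyne : ∀ z : ℝ × ℝ, fderiv ℝ S.G z (0, 1) ≠ 0 := by
    intro z h
    have := hGy z
    rw [h, abs_zero, mul_zero] at this
    linarith
  have hFd : ∀ t : ℝ, 1 ≤ c * |deriv S.F t| := by
    intro t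
    set z : ℝ × ℝ := (t, 0) with hz
    set gy : ℝ := fderiv ℝ S.G z (0, 1) with hgy
    set gx : ℝ := fderiv ℝ S.G z (1, 0) with hgx
    set b : ℝ := -gx / gy with hbdef
    have hv : ((1:ℝ), b) = ((1:ℝ), (0:ℝ)) + b • ((0:ℝ), (1:ℝ)) := by
      simp [Prod.ext_iff]
    have hdG : fderiv ℝ S.G z (1, b) = 0 := by
      rw [hv, map_add, ContinuousLinearMap.map_smul]
      simp only [smul_eq_mul, ← hgx, ← hgy]
      rw [hbdef, div_mul_cancel₀ _ (hGyne z)]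
      ring
    have h := hexp' z (1, b)
    rw [hdG] at h
    rw [Prod.norm_def, Prod.norm_def] at h
    simp only [norm_zero, norm_one, mul_one, Real.norm_eq_abs, abs_zero] at h
    rw [show max |deriv S.F z.1| (0:ℝ) = |deriv S.F z.1| from max_eq_left (abs_nonneg _)] at h
    have h1 : (1:ℝ) ≤ max 1 |b| := le_max_left _ _
    calc (1:ℝ) ≤ max 1 |b| := h1
    _ ≤ c * |deriv S.F z.1| := h
  have hF'c : Continuous (deriv S.F) := hFsm.continuous_deriv one_le_two
  have hFcase : (∀ t, 1 ≤ c * deriv S.F t) ∨ (∀ t, 1 ≤ c * -deriv S.F t) := by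
    have hne : ∀ t, deriv S.F t ≠ 0 := by
      intro t h
      have := hFd t
      rw [h, abs_zero, mul_zero] at this
      linarith
    rcases pos_or_neg_of_ne_zero hF'c hne with hp | hn
    · left; intro t; have := hFd t; rwa [abs_of_pos (hp t)] at this
    · right; intro t; have := hFd t; rwa [abs_of_neg (hn t)] at this
  have hGyc : Continuous (fun z : ℝ × ℝ => fderiv ℝ S.G z (0, 1)) := by
    have h1 : Continuous (fderiv ℝ S.G) := hGsm.continuous_fderiv two_ne_zero
    exact h1.clm_apply continuous_const
  have hGycase : (∀ z, 1 ≤ c * fderiv ℝ S.G z (0,1)) ∨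
      (∀ z, 1 ≤ c * -fderiv ℝ S.G z (0,1)) := by
    rcases pos_or_neg_of_ne_zero2 hGyc hGyne with hp | hn
    · left; intro z; have := hGy z; rwa [abs_of_pos (hp z)] at this
    · right; intro z; have := hGy z; rwa [abs_of_neg (hn z)] at this
  have hGpart : ∀ x s : ℝ, HasDerivAt (fun s' => S.G (x, s')) (fderiv ℝ S.G (x, s) (0, 1)) s := by
    intro x s
    have h1 : HasDerivAt (fun s' : ℝ => ((x, s') : ℝ × ℝ)) ((0:ℝ), (1:ℝ)) s :=
      (hasDerivAt_const s x).prodMk (hasDerivAt_id s)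
    exact (hGdiff (x, s)).hasFDerivAt.comp_hasDerivAt s h1
  have hFper : ∀ t : ℝ, ∃ k : ℤ, S.F (t + 1) - S.F t = k := by
    intro t
    have h1 : ((S.F (t + 1) : ℝ) : 𝕊) = ((S.F t : ℝ) : 𝕊) := by
      rw [← S.liftf (t + 1), ← S.liftf t]
      congr 1
      have h2 : (t + 1 : ℝ) = t + ((1:ℤ) : ℝ) := by push_cast; ring
      rw [h2]
      exact coe_add_int t 1
    obtain ⟨k, hk⟩ := coe_eq_coe_iff.mp h1
    exact ⟨-k, by push_cast; linarith⟩
  have hGper : ∀ z : ℝ × ℝ, ∃ k : ℤ, S.G (z.1, z.2 + 1) - S.G z = k := by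
    intro z
    have h1 : ((S.G (z.1, z.2 + 1) : ℝ) : 𝕊) = ((S.G z : ℝ) : 𝕊) := by
      have e1 := S.liftg (z.1, z.2 + 1)
      have e2 := S.liftg z
      simp only [] at e1 e2
      have h3 : ((z.2 + 1 : ℝ) : 𝕊) = ((z.2 : ℝ) : 𝕊) := by
        have h2 : (z.2 + 1 : ℝ) = z.2 + ((1:ℤ) : ℝ) := by push_cast; ring
        rw [h2]
        exact coe_add_int z.2 1
      rw [← e1, ← e2, h3]
    obtain ⟨k, hk⟩ := coe_eq_coe_iff.mp h1
    exact ⟨-k, by push_cast; linarith⟩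
  set ξ0 : ℝ := circleRep x0 with hξ0
  set η0 : ℝ := circleRep y0 with hη0
  have hx0 : ((ξ0 : ℝ) : 𝕊) = x0 := (QuotientAddGroup.equivIcoMod one_pos 0).symm_apply_apply x0
  have hy0 : ((η0 : ℝ) : 𝕊) = y0 := (QuotientAddGroup.equivIcoMod one_pos 0).symm_apply_apply y0
  obtain ⟨σ, D, u, hσ, hD, hu, huD, hFu, hFmono⟩ :=
    circle_branch_data hcpos hc1 hFdiff hFcase hFper ξ0
  obtain ⟨τ, E, v, hτ, hE, hvc, hvm, hvE, hGv, hGmono⟩ :=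
    fiber_branch_data hcpos hc1 hGdiff.continuous hGpart hGycase hGper η0
  exact abstract_markov S.f S.g S.T (fun p => rfl) S.F S.G S.liftf S.liftg
    hFdiff.continuous hGdiff.continuous hFmono hGmono x0 y0 ξ0 η0 hx0 hy0
    σ τ hσ hτ D E hD hE u hu huD hFu v hvc hvm hvE hGv

end Skew

end MarkovAux

/-- **Fibered Markov partition** (Lemma 2.1). For any `(x₀,y₀) ∈ 𝕋²`, there is a finite
partition `ℛ` of `𝕋²` into Markov proper sets such that: (1) each element maps onto `𝕋²`
and `T` is one-to-one on its interior; (2) the projections of the interiors of two elements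
are either disjoint or equal; (3) the boundary is mapped into `S₀`; (4) `𝒫 = π(ℛ)` is a
Markov partition for `f`. -/
theorem exists_fibered_markov_partition (S : SkewSystem) :
    ∀ x0 y0 : 𝕊, ∃ R : Finset (Set T2),
      IsProperPartition R ∧
      (∀ A ∈ R, S.T '' A = Set.univ ∧ Set.InjOn S.T (interior A)) ∧
      (∀ A ∈ R, ∀ B ∈ R,
        (Prod.fst '' interior A) ∩ (Prod.fst '' interior B) = ∅ ∨
          Prod.fst '' interior A = Prod.fst '' interior B) ∧
      (∀ A ∈ R, S.T '' frontier A ⊆ S0 x0 y0) ∧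
      IsMarkovPartition S.f (projOf R) :=
  fun x0 y0 => MarkovAux.skew_main S x0 y0

end
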